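/- arXiv:1504.02414 — 11 statements merged into one kernel-verified Lean document; each statement's English description precedes it below -/
import Mathlib

section
/- Let G be a nontrivial connected simple graph that contains bridges. If b is the maximum number of bridges incident with a single vertex of G, then pc(G) ≥ b. -/
open SimpleGraph

/-- An edge-coloring `c` with `k` colors is a proper-path coloring of `G` if every pair of
distinct vertices is joined by a path on which no two consecutive edges share a color. -/
def IsProperPathColoring {V : Type*} (G : SimpleGraph V) {k : ℕ}
    (c : Sym2 V → Fin k) : Prop :=
  ∀ u v : V, u ≠ v → ∃ p : G.Walk u v, p.IsPath ∧ (p.edges.map c).Chain' (· ≠ ·)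

/-- The proper connection number of `G`: the least number of colors in a
proper-path coloring of `G`. -/
noncomputable def pc {V : Type*} (G : SimpleGraph V) : ℕ :=
  sInf {k : ℕ | ∃ c : Sym2 V → Fin k, IsProperPathColoring G c}

/-- A bridge must appear on every walk between vertices on opposite sides. -/
lemma bridge_mem_walk_edges {V : Type*} {G : SimpleGraph V} {v x y : V}
    (h1 : G.IsBridge s(v, x)) (h2 : G.Adj v y) (hne : s(v, y) ≠ s(v, x))
    (p : G.Walk x y) : s(v, x) ∈ p.edges := by
  by_contra hmem
  rw [isBridge_iff] at h1
  refine h1 ?_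
  have hsub : ∀ e ∈ p.edges, e ∈ (G \ fromEdgeSet {s(v, x)}).edgeSet := by
    intro e he
    simp only [edgeSet_sdiff, edgeSet_fromEdgeSet, edgeSet_sdiff_sdiff_isDiag, Set.mem_diff,
      Set.mem_singleton_iff]
    exact ⟨p.edges_subset_edgeSet he, fun h' => hmem (h' ▸ he)⟩
  have hxy : (G \ fromEdgeSet {s(v, x)}).Reachable x y := ⟨p.transfer _ hsub⟩
  have hvy : (G \ fromEdgeSet {s(v, x)}).Adj v y := by
    simp only [sdiff_adj, fromEdgeSet_adj, Set.mem_singleton_iff]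
    exact ⟨h2, fun h' => hne h'.1⟩
  exact hvy.reachable.trans hxy.symm

/-- In a proper-path coloring, the bridges incident to a fixed vertex get distinct colors. -/
lemma bridge_colors_injOn {V : Type*} {G : SimpleGraph V} {k : ℕ} {c : Sym2 V → Fin k}
    (hc : IsProperPathColoring G c) (v : V) :
    Set.InjOn c {e : Sym2 V | G.IsBridge e ∧ v ∈ e} := by
  rintro e1 ⟨hb1, hv1⟩ e2 ⟨hb2, hv2⟩ hce
  by_contra hne
  obtain ⟨x, rfl⟩ := Sym2.mem_iff_exists.mp hv1
  obtain ⟨y, rfl⟩ := Sym2.mem_iff_exists.mp hv2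
  have hadj1 : G.Adj v x := hb1.reachable_iff_adj.mp (by
    by_cases hh : v = x
    · subst hh; exact (isBridge_iff.mp hb1 (Reachable.refl _)).elim
    · obtain ⟨p, -⟩ := hc v x hh; exact p.reachable)
  have hadj2 : G.Adj v y := hb2.reachable_iff_adj.mp (by
    by_cases hh : v = y
    · subst hh; exact (isBridge_iff.mp hb2 (Reachable.refl _)).elim
    · obtain ⟨p, -⟩ := hc v y hh; exact p.reachable)
  have hvx : v ≠ x := hadj1.ne
  have hvy : v ≠ y := hadj2.ne
  have hxy : x ≠ y := by rintro rfl; exact hne rfl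
  obtain ⟨p, hp, hchain⟩ := hc x y hxy
  have he1 : s(v, x) ∈ p.edges := bridge_mem_walk_edges hb1 hadj2 (Ne.symm hne) p
  have he2 : s(v, y) ∈ p.edges := by
    have := bridge_mem_walk_edges hb2 hadj1 hne p.reverse
    rwa [Walk.edges_reverse, List.mem_reverse] at this
  -- analyze the structure of p
  cases p with
  | nil => exact hxy rfl
  | cons h q =>
    rename_i w
    rw [Walk.cons_isPath_iff] at hp
    -- the second vertex is v
    have hwv : v = w := by
      rcases List.mem_cons.mp he1 with h' | h'
      · rcases Sym2.eq_iff.mp h' with ⟨h1, h2⟩ | ⟨h1, h2⟩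
        · exact absurd h1 hvx
        · exact h1
      · exact absurd (Walk.snd_mem_support_of_mem_edges q h') hp.2
    subst hwv
    -- e2 is in q.edges
    have he2q : s(v, y) ∈ q.edges := by
      rcases List.mem_cons.mp he2 with h' | h'
      · rcases Sym2.eq_iff.mp h' with ⟨rfl, h2⟩ | ⟨h1, rfl⟩
        · exact absurd h2 hvy.symm
        · exact absurd rfl hxy
      · exact h'
    cases q with
    | nil => simp at he2q
    | cons h' r =>
      rename_i w'
      rw [Walk.cons_isPath_iff] at hp
      have hw'y : y = w' := by
        rcases List.mem_cons.mp he2q with h'' | h''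
        · rcases Sym2.eq_iff.mp h'' with ⟨h1, h2⟩ | ⟨h1, h2⟩
          · exact h2
          · exact absurd h2.symm hvy
        · exact absurd (Walk.fst_mem_support_of_mem_edges r h'') hp.1.2
      subst hw'y
      have hr : r = Walk.nil := Walk.isPath_iff_eq_nil.mp hp.1.1
      subst hr
      simp only [Walk.edges_cons, Walk.edges_nil, List.map_cons, List.map_nil,
        List.Chain', List.isChain_cons_cons, List.isChain_singleton, and_true] at hchain
      apply hchain
      rw [show s(x, v) = s(v, x) from Sym2.eq_swap, hce]

/-- If `G` is a nontrivial connected graph containing bridges and `b` is the maximum number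
of bridges incident with a single vertex of `G`, then `pc G ≥ b`. -/
theorem pc_ge_max_bridges {V : Type*} [Fintype V] [Nontrivial V]
    (G : SimpleGraph V) (hG : G.Connected) (hbr : ∃ e : Sym2 V, G.IsBridge e) (b : ℕ)
    (hb : ∃ v : V, {e : Sym2 V | G.IsBridge e ∧ v ∈ e}.ncard = b)
    (hmax : ∀ v : V, {e : Sym2 V | G.IsBridge e ∧ v ∈ e}.ncard ≤ b) :
    b ≤ pc G := by
  obtain ⟨v, hv⟩ := hb
  classical
  -- the set of valid color counts is nonempty
  have hne : {k : ℕ | ∃ c : Sym2 V → Fin k, IsProperPathColoring G c}.Nonempty := by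
    refine ⟨Fintype.card (Sym2 V), Fintype.equivFin (Sym2 V), ?_⟩
    intro u w huw
    refine ⟨(hG u w).some.toPath.1, (hG u w).some.toPath.2, ?_⟩
    apply List.Pairwise.isChain
    exact ((hG u w).some.toPath.2.edges_nodup).map (Fintype.equivFin (Sym2 V)).injective
  rw [pc]
  refine le_csInf hne ?_
  rintro k ⟨c, hc⟩
  rw [← hv]
  calc {e : Sym2 V | G.IsBridge e ∧ v ∈ e}.ncard
      = (c '' {e : Sym2 V | G.IsBridge e ∧ v ∈ e}).ncard :=
        (Set.ncard_image_of_injOn (bridge_colors_injOn hc v)).symm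
    _ ≤ (Set.univ : Set (Fin k)).ncard :=
        Set.ncard_le_ncard (Set.subset_univ _) (Set.toFinite _)
    _ = k := by rw [Set.ncard_univ, Nat.card_eq_fintype_card, Fintype.card_fin]
end

section
/- If T is a nontrivial tree (a connected acyclic graph with at least two vertices), then pc(T) = Δ(T), the maximum degree of T. -/
open SimpleGraph

namespace PCAux

open SimpleGraph Walk

variable {V : Type*} [DecidableEq V] (T : SimpleGraph V) (hconn : T.Connected) (r : V)

/-- A fixed shortest path from `v` to the root `r`. -/
noncomputable def pathTo (v : V) : T.Walk v r :=
  ((hconn v r).exists_walk_length_eq_dist).choose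

omit [DecidableEq V] in
lemma length_pathTo (v : V) : (pathTo T hconn r v).length = T.dist v r :=
  ((hconn v r).exists_walk_length_eq_dist).choose_spec

omit [DecidableEq V] in
lemma isPath_pathTo (v : V) : (pathTo T hconn r v).IsPath :=
  (pathTo T hconn r v).isPath_of_length_eq_dist (length_pathTo T hconn r v)

/-- The parent of `v` in the tree rooted at `r`. -/
noncomputable def parent (v : V) : V := (pathTo T hconn r v).getVert 1

omit [DecidableEq V] in
lemma parent_r : parent T hconn r r = r := by
  apply Walk.getVert_of_length_le
  rw [length_pathTo, dist_self]
  omega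

omit [DecidableEq V] in
lemma adj_parent {v : V} (hv : v ≠ r) : T.Adj v (parent T hconn r v) := by
  have h0 : 0 < (pathTo T hconn r v).length := by
    rw [length_pathTo]; exact hconn.pos_dist_of_ne hv
  have := (pathTo T hconn r v).adj_getVert_succ h0
  rwa [Walk.getVert_zero] at this

omit [DecidableEq V] in
lemma dist_parent {v : V} (hv : v ≠ r) :
    T.dist (parent T hconn r v) r + 1 = T.dist v r := by
  have hlen := length_pathTo T hconn r v
  unfold parent
  cases hp : pathTo T hconn r v with
  | nil => exact absurd rfl hv
  | cons hadj q =>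
    rename_i u
    rw [hp] at hlen
    rw [Walk.getVert_cons_succ, Walk.getVert_zero]
    have h1 : T.dist u r ≤ q.length := dist_le q
    obtain ⟨q', hq'⟩ := hconn.exists_walk_length_eq_dist u r
    have h2 : T.dist v r ≤ (Walk.cons hadj q').length := dist_le _
    simp only [Walk.length_cons] at hlen h2
    omega

omit [DecidableEq V] in
lemma dist_parent_lt {v : V} (hv : v ≠ r) :
    T.dist (parent T hconn r v) r < T.dist v r := by
  have := dist_parent T hconn r hv; omega

lemma not_mem_support {u v : V} (h : T.dist v r < T.dist u r) :
    u ∉ (pathTo T hconn r v).support := by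
  intro hu
  have h1 : T.dist u r ≤ ((pathTo T hconn r v).dropUntil u hu).length := dist_le _
  have h2 := (pathTo T hconn r v).length_dropUntil_le hu
  rw [length_pathTo] at h2
  omega

/-- For any edge, one endpoint is the parent of the other. -/
lemma parent_or (hac : T.IsAcyclic) {u v : V} (hadj : T.Adj u v) :
    parent T hconn r u = v ∨ parent T hconn r v = u := by
  by_contra hcon
  push_neg at hcon
  obtain ⟨h1, h2⟩ := hcon
  have key : ∀ a b : V, T.Adj a b → parent T hconn r b ≠ a →
      b ∈ (pathTo T hconn r a).support := by
    intro a b hab hpb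
    by_contra hns
    have hpath : (Walk.cons hab.symm (pathTo T hconn r a)).IsPath :=
      (isPath_pathTo T hconn r a).cons hns
    have huniq := hac.path_unique ⟨pathTo T hconn r b, isPath_pathTo T hconn r b⟩
      ⟨Walk.cons hab.symm (pathTo T hconn r a), hpath⟩
    have hw : pathTo T hconn r b = Walk.cons hab.symm (pathTo T hconn r a) :=
      congrArg Subtype.val huniq
    apply hpb
    unfold parent
    rw [hw, Walk.getVert_cons_succ, Walk.getVert_zero]
  have hvmem : v ∈ (pathTo T hconn r u).support := key u v hadj h2
  have humem : u ∈ (pathTo T hconn r v).support := key v u hadj.symm h1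
  have split : ∀ a b : V, ∀ hm : b ∈ (pathTo T hconn r a).support,
      T.dist b r + ((pathTo T hconn r a).takeUntil b hm).length ≤ T.dist a r := by
    intro a b hm
    have hspec := (pathTo T hconn r a).take_spec hm
    have hlen := congrArg Walk.length hspec
    rw [Walk.length_append, length_pathTo] at hlen
    have : T.dist b r ≤ ((pathTo T hconn r a).dropUntil b hm).length := dist_le _
    omega
  have e1 := split u v hvmem
  have e2 := split v u humem
  have hz : ((pathTo T hconn r u).takeUntil v hvmem).length = 0 := by omega
  exact hadj.ne (Walk.eq_of_length_eq_zero hz)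

/-- If `v` is adjacent to `u` and strictly closer to the root, then `v` is the
parent of `u`. -/
lemma parent_eq_of_adj (hac : T.IsAcyclic) {u v : V} (hadj : T.Adj u v)
    (hd : T.dist v r < T.dist u r) : parent T hconn r u = v := by
  rcases parent_or T hconn r hac hadj with h | h
  · exact h
  · exfalso
    have hv : v ≠ r := by
      intro hvr
      rw [hvr, parent_r] at h
      rw [hvr, ← h] at hadj
      exact T.loopless.irrefl _ hadj
    have := dist_parent T hconn r hv
    rw [h] at this
    omega

section Coloring

variable [Fintype V] [DecidableRel T.Adj] {m : ℕ}

/-- The neighbors of `u` other than its parent. -/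
noncomputable def S (u : V) : Finset V :=
  (T.neighborFinset u).erase (parent T hconn r u)

lemma mem_S {v : V} (hv : v ≠ r) : v ∈ S T hconn r (parent T hconn r v) := by
  rw [S, Finset.mem_erase, mem_neighborFinset]
  constructor
  · by_cases hu : parent T hconn r v = r
    · rw [hu, parent_r]; exact hv
    · have h1 := dist_parent_lt T hconn r hu
      have h2 := dist_parent_lt T hconn r hv
      intro hcon
      rw [← hcon] at h1
      omega
  · exact (adj_parent T hconn r hv).symm

lemma card_S_le_root (hdeg : ∀ v, T.degree v ≤ m + 1) :
    (S T hconn r r).card ≤ m + 1 := by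
  calc (S T hconn r r).card ≤ (T.neighborFinset r).card := Finset.card_erase_le
    _ = T.degree r := T.card_neighborFinset_eq_degree r
    _ ≤ m + 1 := hdeg r

lemma card_S_le (hdeg : ∀ v, T.degree v ≤ m + 1) {u : V} (hu : u ≠ r) :
    (S T hconn r u).card ≤ m := by
  have hmem : parent T hconn r u ∈ T.neighborFinset u := by
    rw [mem_neighborFinset]; exact adj_parent T hconn r hu
  rw [S, Finset.card_erase_of_mem hmem]
  have h := hdeg u
  rw [← T.card_neighborFinset_eq_degree u] at h
  omega

variable (hdeg : ∀ v, T.degree v ≤ m + 1)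

lemma mem_S_root {v : V} (hv : v ≠ r) (hu : parent T hconn r v = r) :
    v ∈ S T hconn r r := by
  have h := mem_S T hconn r hv
  rwa [hu] at h

/-- For each non-root `v`, `col v` is the color of the edge from `v` to its parent. -/
noncomputable def col (v : V) : Fin (m + 1) :=
  if hv : v = r then 0
  else
    if hu : parent T hconn r v = r then
      Fin.castLE (card_S_le_root T hconn r hdeg)
        ((S T hconn r r).equivFin ⟨v, mem_S_root T hconn r hv hu⟩)
    else
      (col (parent T hconn r v)).succAbove
        (Fin.castLE (card_S_le T hconn r hdeg hu)
          ((S T hconn r (parent T hconn r v)).equivFin ⟨v, mem_S T hconn r hv⟩))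
termination_by T.dist v r
decreasing_by exact dist_parent_lt T hconn r hv

lemma col_eq_root {v : V} (hv : v ≠ r) (hu : parent T hconn r v = r) :
    col T hconn r hdeg v = Fin.castLE (card_S_le_root T hconn r hdeg)
      ((S T hconn r r).equivFin ⟨v, mem_S_root T hconn r hv hu⟩) := by
  rw [col, dif_neg hv, dif_pos hu]

lemma col_eq_nonroot {v : V} (hv : v ≠ r) (hu : parent T hconn r v ≠ r) :
    col T hconn r hdeg v = (col T hconn r hdeg (parent T hconn r v)).succAbove
      (Fin.castLE (card_S_le T hconn r hdeg hu)
        ((S T hconn r (parent T hconn r v)).equivFin ⟨v, mem_S T hconn r hv⟩)) := by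
  rw [col, dif_neg hv, dif_neg hu]

lemma col_eq_nonroot' {v u : V} (hv : v ≠ r) (hpv : parent T hconn r v = u)
    (hu : u ≠ r) (hmem : v ∈ S T hconn r u) :
    col T hconn r hdeg v = (col T hconn r hdeg u).succAbove
      (Fin.castLE (card_S_le T hconn r hdeg hu)
        ((S T hconn r u).equivFin ⟨v, hmem⟩)) := by
  subst hpv
  exact col_eq_nonroot T hconn r hdeg hv hu

lemma col_ne_parent {v : V} (hv : v ≠ r) (hu : parent T hconn r v ≠ r) :
    col T hconn r hdeg v ≠ col T hconn r hdeg (parent T hconn r v) := by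
  rw [col_eq_nonroot T hconn r hdeg hv hu]
  exact Fin.succAbove_ne _ _

lemma col_inj {u v w : V} (hv : v ≠ r) (hw : w ≠ r)
    (hpv : parent T hconn r v = u) (hpw : parent T hconn r w = u)
    (hcol : col T hconn r hdeg v = col T hconn r hdeg w) : v = w := by
  by_cases hu : u = r
  · rw [col_eq_root T hconn r hdeg hv (hpv.trans hu),
      col_eq_root T hconn r hdeg hw (hpw.trans hu)] at hcol
    have h1 := (Fin.castLE_injective _) hcol
    have h2 := ((S T hconn r r).equivFin).injective h1
    exact congrArg Subtype.val h2
  · have hmv : v ∈ S T hconn r u := hpv ▸ mem_S T hconn r hv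
    have hmw : w ∈ S T hconn r u := hpw ▸ mem_S T hconn r hw
    rw [col_eq_nonroot' T hconn r hdeg hv hpv hu hmv,
      col_eq_nonroot' T hconn r hdeg hw hpw hu hmw] at hcol
    have h0 := Fin.succAbove_right_injective hcol
    have h1 := (Fin.castLE_injective _) h0
    have h2 := ((S T hconn r u).equivFin).injective h1
    exact congrArg Subtype.val h2

/-- The edge coloring: an edge gets the `col` of its endpoint farther from the root. -/
noncomputable def ecol : Sym2 V → Fin (m + 1) :=
  Sym2.lift ⟨fun a b =>
    if T.dist a r < T.dist b r then col T hconn r hdeg b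
    else if T.dist b r < T.dist a r then col T hconn r hdeg a else 0, by
    intro a b
    dsimp only
    rcases lt_trichotomy (T.dist a r) (T.dist b r) with h | h | h
    · rw [if_pos h, if_neg (by omega), if_pos h]
    · rw [if_neg (by omega), if_neg (by omega), if_neg (by omega), if_neg (by omega)]
    · rw [if_neg (by omega), if_pos h, if_pos h]⟩

lemma ecol_child {u v : V} (hadj : T.Adj u v) (hp : parent T hconn r v = u) :
    ecol T hconn r hdeg s(u, v) = col T hconn r hdeg v := by
  have hv : v ≠ r := by
    intro hvr
    subst hvr
    rw [parent_r] at hp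
    exact hadj.ne hp.symm
  have hd : T.dist u r < T.dist v r := hp ▸ dist_parent_lt T hconn r hv
  rw [ecol, Sym2.lift_mk]
  dsimp only
  rw [if_pos hd]

/-- Adjacent edges receive different colors. -/
lemma ecol_locally_proper (hac : T.IsAcyclic) {u v w : V} (hv : T.Adj u v)
    (hw : T.Adj u w) (hvw : v ≠ w) :
    ecol T hconn r hdeg s(u, v) ≠ ecol T hconn r hdeg s(u, w) := by
  rcases parent_or T hconn r hac hv with hp1 | hp1 <;>
    rcases parent_or T hconn r hac hw with hp2 | hp2
  · exact absurd (hp1.symm.trans hp2) hvw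
  · -- v = parent u, w a child of u
    have hur : u ≠ r := by
      intro h; subst h
      rw [parent_r] at hp1
      exact hv.ne hp1
    have hwr : w ≠ r := by
      intro h; subst h
      rw [parent_r] at hp2
      exact hur hp2.symm
    rw [Sym2.eq_swap (a := u) (b := v)]
    rw [ecol_child T hconn r hdeg hv.symm hp1, ecol_child T hconn r hdeg hw hp2]
    have hpwr : parent T hconn r w ≠ r := by rw [hp2]; exact hur
    have hne := col_ne_parent T hconn r hdeg hwr hpwr
    rw [hp2] at hne
    exact fun h => hne (h.symm)
  · -- w = parent u, v a child of u
    have hur : u ≠ r := by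
      intro h; subst h
      rw [parent_r] at hp2
      exact hw.ne hp2
    have hvr : v ≠ r := by
      intro h; subst h
      rw [parent_r] at hp1
      exact hur hp1.symm
    rw [Sym2.eq_swap (a := u) (b := w)]
    rw [ecol_child T hconn r hdeg hw.symm hp2, ecol_child T hconn r hdeg hv hp1]
    have hpvr : parent T hconn r v ≠ r := by rw [hp1]; exact hur
    have hne := col_ne_parent T hconn r hdeg hvr hpvr
    rw [hp1] at hne
    exact hne
  · -- both children
    have hvr : v ≠ r := by
      intro h; subst h
      rw [parent_r] at hp1
      exact hv.ne hp1.symm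
    have hwr : w ≠ r := by
      intro h; subst h
      rw [parent_r] at hp2
      exact hw.ne hp2.symm
    rw [ecol_child T hconn r hdeg hv hp1, ecol_child T hconn r hdeg hw hp2]
    intro hcol
    exact hvw (col_inj T hconn r hdeg hvr hwr hp1 hp2 hcol)

/-- Every path is properly colored by `ecol`. -/
lemma ecol_path_proper (hac : T.IsAcyclic) : ∀ {a b : V} (p : T.Walk a b), p.IsPath →
    ((p.edges.map (ecol T hconn r hdeg)).Chain' (· ≠ ·)) := by
  intro a b p
  induction p with
  | nil => simp [List.Chain']
  | @cons x y z hxy q ih =>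
    cases q with
    | nil => simp [List.Chain']
    | @cons y' d z' hyd q' =>
      intro hp
      rw [Walk.cons_isPath_iff] at hp
      obtain ⟨hp', hxs⟩ := hp
      have hrest := ih hp'
      have hxd : x ≠ d := by
        intro hcon
        apply hxs
        rw [Walk.support_cons, hcon]
        exact List.mem_cons_of_mem _ (Walk.start_mem_support _)
      have hne : ecol T hconn r hdeg s(x, y) ≠ ecol T hconn r hdeg s(y, d) := by
        rw [Sym2.eq_swap (a := x) (b := y)]
        exact ecol_locally_proper T hconn r hdeg hac hxy.symm hyd hxd
      simp only [Walk.edges_cons, List.map_cons] at hrest ⊢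
      exact List.IsChain.cons_cons hne hrest

end Coloring

end PCAux

/-- If `T` is a nontrivial tree, then `pc T = Δ(T)`. -/
theorem pc_tree_eq_maxDegree {V : Type*} [Fintype V] [Nontrivial V]
    (T : SimpleGraph V) [DecidableRel T.Adj] (hconn : T.Connected) (hac : T.IsAcyclic) :
    pc T = T.maxDegree := by
  classical
  obtain ⟨u0, v0, huv0⟩ := exists_pair_ne V
  obtain ⟨p0⟩ := hconn u0 v0
  have hadj0 : ∃ w, T.Adj u0 w := by
    cases p0 with
    | nil => exact absurd rfl huv0
    | cons h q => exact ⟨_, h⟩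
  obtain ⟨w0, hw0⟩ := hadj0
  have hΔ1 : 1 ≤ T.maxDegree := by
    have h1 : 0 < T.degree u0 := T.degree_pos_iff_exists_adj u0 |>.mpr ⟨w0, hw0⟩
    have h2 := T.degree_le_maxDegree u0
    omega
  obtain ⟨m, hm⟩ : ∃ m, T.maxDegree = m + 1 := ⟨T.maxDegree - 1, by omega⟩
  have hdeg : ∀ v, T.degree v ≤ m + 1 := fun v => hm ▸ T.degree_le_maxDegree v
  have hmem : T.maxDegree ∈ {k : ℕ | ∃ c : Sym2 V → Fin k, IsProperPathColoring T c} := by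
    rw [hm]
    refine ⟨PCAux.ecol T hconn u0 hdeg, fun a b hab => ?_⟩
    obtain ⟨w⟩ := hconn a b
    exact ⟨w.bypass, w.bypass_isPath,
      PCAux.ecol_path_proper T hconn u0 hdeg hac w.bypass w.bypass_isPath⟩
  have hlb : ∀ k ∈ {k : ℕ | ∃ c : Sym2 V → Fin k, IsProperPathColoring T c},
      T.maxDegree ≤ k := by
    rintro k ⟨c, hc⟩
    obtain ⟨u, hu⟩ := T.exists_maximal_degree_vertex
    rw [hu, ← T.card_neighborFinset_eq_degree u]
    have hcard : (T.neighborFinset u).card ≤ (Finset.univ : Finset (Fin k)).card := by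
      apply Finset.card_le_card_of_injOn (fun w => c s(u, w))
        (fun _ _ => Finset.mem_univ _)
      intro v hv w hw hcol
      by_contra hvw
      have hvu : T.Adj v u := ((mem_neighborFinset T u v).mp hv).symm
      have huw : T.Adj u w := (mem_neighborFinset T u w).mp hw
      obtain ⟨p, hp, hchain⟩ := hc v w hvw
      have hq : (Walk.cons hvu (Walk.cons huw Walk.nil)).IsPath := by
        rw [Walk.isPath_def]
        simp only [Walk.support_cons, Walk.support_nil]
        refine List.nodup_cons.mpr ⟨?_, List.nodup_cons.mpr ⟨?_, List.nodup_singleton _⟩⟩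
        · simp only [List.mem_cons, List.mem_singleton, List.not_mem_nil]
          push_neg
          exact ⟨hvu.ne, hvw, by simp⟩
        · simp only [List.mem_cons, List.mem_singleton, List.not_mem_nil]
          push_neg
          exact ⟨huw.ne, by simp⟩
      have huniq := hac.path_unique ⟨p, hp⟩ ⟨Walk.cons hvu (Walk.cons huw Walk.nil), hq⟩
      have hpe : p = Walk.cons hvu (Walk.cons huw Walk.nil) := congrArg Subtype.val huniq
      rw [hpe] at hchain
      simp only [Walk.edges_cons, Walk.edges_nil, List.map_cons, List.map_nil,
        List.Chain', List.isChain_cons_cons, List.isChain_singleton, and_true] at hchain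
      apply hchain
      rw [Sym2.eq_swap]
      exact hcol
    simpa using hcard
  exact le_antisymm (Nat.sInf_le hmem) (le_csInf ⟨_, hmem⟩ hlb)
end

section
/- Every complete k-partite graph K_{n_1,n_2,…,n_k} with k ≥ 3 parts that is not a complete graph (i.e., some part has at least two vertices) has proper connection number 2, and there exists a proper-path 2-coloring of it having the strong property. -/
open SimpleGraph

/-- The strong property: any two distinct vertices are joined by two proper paths whose
first edge colors differ and whose last edge colors differ. -/
def HasStrongProperty {V : Type*} (G : SimpleGraph V) {k : ℕ}
    (c : Sym2 V → Fin k) : Prop :=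
  ∀ u v : V, u ≠ v → ∃ p q : G.Walk u v,
    p.IsPath ∧ (p.edges.map c).Chain' (· ≠ ·) ∧
    q.IsPath ∧ (q.edges.map c).Chain' (· ≠ ·) ∧
    (p.edges.map c).head? ≠ (q.edges.map c).head? ∧
    (p.edges.map c).getLast? ≠ (q.edges.map c).getLast?

private lemma fin2cases : ∀ x : Fin 2, x = 0 ∨ x = 1 := by decide

section helpers
variable {V : Type*} {G : SimpleGraph V} (c : Sym2 V → Fin 2)

private lemma exists_walk1 {u v : V} (h : G.Adj u v) :
    ∃ p : G.Walk u v, p.IsPath ∧ ((p.edges.map c).Chain' (· ≠ ·)) ∧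
      (p.edges.map c).head? = some (c s(u,v)) ∧
      (p.edges.map c).getLast? = some (c s(u,v)) := by
  refine ⟨Walk.cons h Walk.nil, ?_, ?_, ?_, ?_⟩ <;>
    simp [Walk.cons_isPath_iff, h.ne, List.Chain', List.isChain_cons_cons]

private lemma exists_walk2 {u w v : V} (h1 : G.Adj u w) (h2 : G.Adj w v) (huv : u ≠ v)
    (hc : c s(u,w) ≠ c s(w,v)) :
    ∃ p : G.Walk u v, p.IsPath ∧ ((p.edges.map c).Chain' (· ≠ ·)) ∧
      (p.edges.map c).head? = some (c s(u,w)) ∧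
      (p.edges.map c).getLast? = some (c s(w,v)) := by
  refine ⟨Walk.cons h1 (Walk.cons h2 Walk.nil), ?_, ?_, ?_, ?_⟩ <;>
    simp [Walk.cons_isPath_iff, h1.ne, h2.ne, huv, hc, List.Chain', List.isChain_cons_cons]

private lemma exists_walk3 {u w x v : V} (h1 : G.Adj u w) (h2 : G.Adj w x) (h3 : G.Adj x v)
    (hux : u ≠ x) (huv : u ≠ v) (hwv : w ≠ v)
    (hc1 : c s(u,w) ≠ c s(w,x)) (hc2 : c s(w,x) ≠ c s(x,v)) :
    ∃ p : G.Walk u v, p.IsPath ∧ ((p.edges.map c).Chain' (· ≠ ·)) ∧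
      (p.edges.map c).head? = some (c s(u,w)) ∧
      (p.edges.map c).getLast? = some (c s(x,v)) := by
  refine ⟨Walk.cons h1 (Walk.cons h2 (Walk.cons h3 Walk.nil)), ?_, ?_, ?_, ?_⟩ <;>
    simp [Walk.cons_isPath_iff, h1.ne, h2.ne, h3.ne, hux, huv, hwv, hc1, hc2, List.Chain',
      List.isChain_cons_cons]

private lemma exists_walk4 {u w x y v : V} (h1 : G.Adj u w) (h2 : G.Adj w x) (h3 : G.Adj x y)
    (h4 : G.Adj y v)
    (hux : u ≠ x) (huy : u ≠ y) (huv : u ≠ v) (hwy : w ≠ y) (hwv : w ≠ v) (hxv : x ≠ v)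
    (hc1 : c s(u,w) ≠ c s(w,x)) (hc2 : c s(w,x) ≠ c s(x,y)) (hc3 : c s(x,y) ≠ c s(y,v)) :
    ∃ p : G.Walk u v, p.IsPath ∧ ((p.edges.map c).Chain' (· ≠ ·)) ∧
      (p.edges.map c).head? = some (c s(u,w)) ∧
      (p.edges.map c).getLast? = some (c s(y,v)) := by
  refine ⟨Walk.cons h1 (Walk.cons h2 (Walk.cons h3 (Walk.cons h4 Walk.nil))), ?_, ?_, ?_, ?_⟩ <;>
    simp [Walk.cons_isPath_iff, h1.ne, h2.ne, h3.ne, h4.ne, hux, huy, huv, hwy, hwv, hxv,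
      hc1, hc2, hc3, List.Chain', List.isChain_cons_cons]

end helpers

/-- Every complete `k`-partite graph with `k ≥ 3` parts (all nonempty) which is not
complete (some part has at least two vertices) has proper connection number 2, and admits
a proper-path 2-coloring with the strong property. -/
theorem pc_complete_multipartite {V : Type*} [Fintype V] (G : SimpleGraph V) (k : ℕ)
    (hk : 3 ≤ k) (f : V → Fin k) (hsurj : Function.Surjective f)
    (hadj : ∀ u v : V, G.Adj u v ↔ f u ≠ f v)
    (hbig : ∃ i : Fin k, 2 ≤ Nat.card {v : V // f v = i}) :
    pc G = 2 ∧ ∃ c : Sym2 V → Fin 2, IsProperPathColoring G c ∧ HasStrongProperty G c := by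
  classical
  obtain ⟨i0, hi0⟩ := hbig
  have hnt : Nontrivial {v : V // f v = i0} := by
    rw [← Finite.one_lt_card_iff_nontrivial]; omega
  obtain ⟨⟨a, hfa⟩, ⟨a', hfa'⟩, hnee⟩ := hnt
  have haa' : a ≠ a' := fun h => hnee (by simpa using h)
  have hcompl : (({i0} : Finset (Fin k))ᶜ).Nonempty := by
    rw [← Finset.card_pos, Finset.card_compl]; simp; omega
  obtain ⟨j1, hj1mem⟩ := hcompl
  have hj1 : j1 ≠ i0 := by simpa using hj1mem
  have hcompl2 : (({i0, j1} : Finset (Fin k))ᶜ).Nonempty := by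
    rw [← Finset.card_pos, Finset.card_compl]
    have : ({i0, j1} : Finset (Fin k)).card ≤ 2 :=
      (Finset.card_insert_le _ _).trans (by simp)
    simp only [Fintype.card_fin]; omega
  obtain ⟨j2, hj2mem⟩ := hcompl2
  have hj2 : j2 ≠ i0 ∧ j2 ≠ j1 := by simpa using hj2mem
  obtain ⟨p, hfp⟩ := hsurj j1
  obtain ⟨q, hfq⟩ := hsurj j2
  have hi0j1 : i0 ≠ j1 := fun e => hj1 e.symm
  have hi0j2 : i0 ≠ j2 := fun e => hj2.1 e.symm
  have hj1j2 : j1 ≠ j2 := fun e => hj2.2 e.symm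
  -- the coloring
  set b : V → Fin 2 := fun z => if z = a' then 1 else if f z = j2 then 1 else 0 with hbdef
  set c : Sym2 V → Fin 2 :=
    Sym2.lift ⟨fun x y => b x + b y, fun _ _ => add_comm _ _⟩ with hcdef
  have hcc : ∀ x y : V, c s(x,y) = b x + b y := fun _ _ => rfl
  have hpa' : p ≠ a' := fun e => hj1 (by rw [← hfp, e, hfa'])
  have hba : b a = 0 := by
    rw [hbdef]; simp only
    rw [if_neg haa', if_neg (by rw [hfa]; exact hi0j2)]
  have hba' : b a' = 1 := by rw [hbdef]; simp
  have hbp : b p = 0 := by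
    rw [hbdef]; simp only
    rw [if_neg hpa', if_neg (by rw [hfp]; exact hj1j2)]
  have hbq : b q = 1 := by
    rw [hbdef]; simp only [hfq, if_pos rfl]
    split <;> rfl
  have hb0 : ∀ z : V, b z = 0 → z ≠ a' ∧ f z ≠ j2 := by
    intro z; rw [hbdef]; simp only
    split_ifs with h1 h2 <;> intro h <;> first | (exact absurd h (by decide)) | exact ⟨h1, h2⟩
  have hb1 : ∀ z : V, b z = 1 → z = a' ∨ f z = j2 := by
    intro z; rw [hbdef]; simp only
    split_ifs with h1 h2 <;> intro h <;> first | tauto | (exact absurd h (by decide))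
  have hbj1 : ∀ z : V, f z = j1 → b z = 0 := by
    intro z hz; rw [hbdef]; simp only
    rw [if_neg (fun e => hj1 (by rw [← hz, e, hfa'])), if_neg (by rw [hz]; exact hj1j2)]
  have hbj2 : ∀ z : V, f z = j2 → b z = 1 := by
    intro z hz; rw [hbdef]; simp only [hz, if_pos rfl]
    split <;> rfl
  have hbne : ∀ {x y : V}, b x ≠ b y → x ≠ y := fun h e => h (by rw [e])
  have hfne : ∀ {x y : V}, f x ≠ f y → x ≠ y := fun h e => h (by rw [e])
  have hA : ∀ {x y : V}, f x ≠ f y → G.Adj x y := fun h => (hadj _ _).mpr h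
  -- anchor adjacencies
  have hApa' : G.Adj p a' := hA (by rw [hfp, hfa']; exact hj1)
  have hAa'p : G.Adj a' p := hApa'.symm
  have hAa'q : G.Adj a' q := hA (by rw [hfa', hfq]; exact hi0j2)
  have hAqa' : G.Adj q a' := hAa'q.symm
  have hAaq : G.Adj a q := hA (by rw [hfa, hfq]; exact hi0j2)
  have hAqa : G.Adj q a := hAaq.symm
  have hApa : G.Adj p a := hA (by rw [hfp, hfa]; exact hj1)
  have hAap : G.Adj a p := hApa.symm
  have hpq : p ≠ q := hfne (by rw [hfp, hfq]; exact hj1j2)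
  have hqp : q ≠ p := hpq.symm
  have haa'2 : a' ≠ a := haa'.symm
  -- the strong property
  have hstrong : HasStrongProperty G c := by
    intro u v huv
    by_cases hfuv : f u = f v
    · -- u, v in the same part
      by_cases hbuv : b u = b v
      · -- same bit : two length-4 paths
        rcases fin2cases (b u) with hbu | hbu
        · -- bit 0
          have hbv : b v = 0 := hbuv.symm.trans hbu
          have hua' : u ≠ a' := hbne (by rw [hbu, hba']; decide)
          have hva' : v ≠ a' := hbne (by rw [hbv, hba']; decide)
          have hufj2 : f u ≠ j2 := (hb0 u hbu).2
          have hvfj2 : f v ≠ j2 := (hb0 v hbv).2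
          by_cases hfi : f u = i0
          · -- P1 : u-p-a'-q-v , P2 : u-q-a'-p-v
            obtain ⟨P, hp1, hp2, hp3, hp4⟩ := exists_walk4 c
              (hA (by rw [hfi, hfp]; exact hi0j1)) hApa' hAa'q
              (hA (by rw [hfq, ← hfuv, hfi]; exact hj2.1))
              hua' (hbne (by rw [hbu, hbq]; decide)) huv hpq
              (hfne (by rw [hfp, ← hfuv, hfi]; exact hj1)) hva'.symm
              (by simp only [hcc, hbu, hbp, hba']; decide)
              (by simp only [hcc, hbp, hba', hbq]; decide)
              (by simp only [hcc, hba', hbq, hbv]; decide)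
            obtain ⟨Q, hq1, hq2, hq3, hq4⟩ := exists_walk4 c
              (hA (by rw [hfi, hfq]; exact hi0j2)) hAqa' hAa'p
              (hA (by rw [hfp, ← hfuv, hfi]; exact hj1))
              hua' (hfne (by rw [hfi, hfp]; exact hi0j1)) huv hqp
              (hbne (by rw [hbq, hbv]; decide)) hva'.symm
              (by simp only [hcc, hbu, hbq, hba']; decide)
              (by simp only [hcc, hbq, hba', hbp]; decide)
              (by simp only [hcc, hba', hbp, hbv]; decide)
            refine ⟨P, Q, hp1, hp2, hq1, hq2, ?_, ?_⟩ <;>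
              simp only [hp3, hp4, hq3, hq4, ne_eq, Option.some.injEq, hcc, hbu, hbv,
                hba, hba', hbp, hbq] <;> decide
          · -- P1 : u-a-q-a'-v , P2 : u-a'-q-a-v
            have hfvi : f v ≠ i0 := by rw [← hfuv]; exact hfi
            obtain ⟨P, hp1, hp2, hp3, hp4⟩ := exists_walk4 c
              (hA (by rw [hfa]; exact hfi)) hAaq hAqa'
              (hA (by rw [hfa']; exact fun e => hfvi e.symm))
              (hbne (by rw [hbu, hbq]; decide)) hua' huv haa'
              (hfne (by rw [hfa]; exact fun e => hfvi e.symm))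
              (hbne (by rw [hbq, hbv]; decide))
              (by simp only [hcc, hbu, hba, hbq]; decide)
              (by simp only [hcc, hba, hbq, hba']; decide)
              (by simp only [hcc, hbq, hba', hbv]; decide)
            obtain ⟨Q, hq1, hq2, hq3, hq4⟩ := exists_walk4 c
              (hA (by rw [hfa']; exact hfi)) hAa'q hAqa
              (hA (by rw [hfa]; exact fun e => hfvi e.symm))
              (hbne (by rw [hbu, hbq]; decide))
              (hfne (by rw [hfa]; exact hfi)) huv haa'2
              hva'.symm (hbne (by rw [hbq, hbv]; decide))
              (by simp only [hcc, hbu, hba', hbq]; decide)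
              (by simp only [hcc, hba', hbq, hba]; decide)
              (by simp only [hcc, hbq, hba, hbv]; decide)
            refine ⟨P, Q, hp1, hp2, hq1, hq2, ?_, ?_⟩ <;>
              simp only [hp3, hp4, hq3, hq4, ne_eq, Option.some.injEq, hcc, hbu, hbv,
                hba, hba', hbp, hbq] <;> decide
        · -- bit 1 : then f u = j2
          have hbv : b v = 1 := hbuv.symm.trans hbu
          have hfj2 : f u = j2 := by
            rcases hb1 u hbu with rfl | h
            · rcases hb1 v hbv with rfl | h2
              · exact absurd rfl huv
              · exact absurd (hfuv.symm.trans hfa') (by rw [h2]; exact hj2.1)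
            · exact h
          have hfvj2 : f v = j2 := hfuv ▸ hfj2
          -- P1 : u-a'-p-a-v , P2 : u-a-p-a'-v
          obtain ⟨P, hp1, hp2, hp3, hp4⟩ := exists_walk4 c
            (hA (by rw [hfj2, hfa']; exact hj2.1)) hAa'p hApa
            (hA (by rw [hfa, hfvj2]; exact hi0j2))
            (hfne (by rw [hfj2, hfp]; exact hj2.2)) (hfne (by rw [hfj2, hfa]; exact hj2.1))
            huv haa'2 (hfne (by rw [hfa', hfvj2]; exact hi0j2))
            (hfne (by rw [hfp, hfvj2]; exact hj1j2))
            (by simp only [hcc, hbu, hba', hbp]; decide)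
            (by simp only [hcc, hba', hbp, hba]; decide)
            (by simp only [hcc, hbp, hba, hbv]; decide)
          obtain ⟨Q, hq1, hq2, hq3, hq4⟩ := exists_walk4 c
            (hA (by rw [hfj2, hfa]; exact hj2.1)) hAap hApa'
            (hA (by rw [hfa', hfvj2]; exact hi0j2))
            (hfne (by rw [hfj2, hfp]; exact hj2.2)) (hfne (by rw [hfj2, hfa']; exact hj2.1))
            huv haa' (hfne (by rw [hfa, hfvj2]; exact hi0j2))
            (hfne (by rw [hfp, hfvj2]; exact hj1j2))
            (by simp only [hcc, hbu, hba, hbp]; decide)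
            (by simp only [hcc, hba, hbp, hba']; decide)
            (by simp only [hcc, hbp, hba', hbv]; decide)
          refine ⟨P, Q, hp1, hp2, hq1, hq2, ?_, ?_⟩ <;>
            simp only [hp3, hp4, hq3, hq4, ne_eq, Option.some.injEq, hcc, hbu, hbv,
              hba, hba', hbp, hbq] <;> decide
      · -- same part, different bits : two length-2 paths via p and q
        have hfj1 : f u ≠ j1 := fun h => hbuv ((hbj1 u h).trans (hbj1 v (hfuv ▸ h)).symm)
        have hfj2 : f u ≠ j2 := fun h => hbuv ((hbj2 u h).trans (hbj2 v (hfuv ▸ h)).symm)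
        rcases fin2cases (b u) with hbu | hbu <;>
        [ have hbv : b v = 1 := ((fin2cases (b v)).resolve_left
            (fun h => hbuv (hbu.trans h.symm)));
          have hbv : b v = 0 := ((fin2cases (b v)).resolve_right
            (fun h => hbuv (hbu.trans h.symm)))] <;>
        · obtain ⟨P, hp1, hp2, hp3, hp4⟩ := exists_walk2 c
            (hA (by rw [hfp]; exact hfj1)) (hA (by rw [hfp, ← hfuv]; exact fun e => hfj1 e.symm))
            huv (by simp only [hcc, hbu, hbp, hbv]; decide)
          obtain ⟨Q, hq1, hq2, hq3, hq4⟩ := exists_walk2 c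
            (hA (by rw [hfq]; exact hfj2)) (hA (by rw [hfq, ← hfuv]; exact fun e => hfj2 e.symm))
            huv (by simp only [hcc, hbu, hbq, hbv]; decide)
          refine ⟨P, Q, hp1, hp2, hq1, hq2, ?_, ?_⟩ <;>
            simp only [hp3, hp4, hq3, hq4, ne_eq, Option.some.injEq, hcc, hbu, hbv,
              hba, hba', hbp, hbq] <;> decide
    · -- u, v in different parts : adjacent
      have hfvu : f v ≠ f u := fun e => hfuv e.symm
      by_cases hbuv : b u = b v
      · -- same bit : edge + length-3 path
        obtain ⟨P, hp1, hp2, hp3, hp4⟩ := exists_walk1 c (hA hfuv)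
        rcases fin2cases (b u) with hbu | hbu
        · have hbv : b v = 0 := hbuv.symm.trans hbu
          have hvfj2 : f v ≠ j2 := (hb0 v hbv).2
          by_cases hfi : f u = i0
          · -- u-q-a'-v
            have hfvi : f v ≠ i0 := by rw [← hfi]; exact hfvu
            obtain ⟨Q, hq1, hq2, hq3, hq4⟩ := exists_walk3 c
              (hA (by rw [hfi, hfq]; exact hi0j2)) hAqa'
              (hA (by rw [hfa']; exact fun e => hfvi e.symm))
              (hbne (by rw [hbu, hba']; decide)) huv (hbne (by rw [hbq, hbv]; decide))
              (by simp only [hcc, hbu, hbq, hba']; decide)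
              (by simp only [hcc, hbq, hba', hbv]; decide)
            refine ⟨P, Q, hp1, hp2, hq1, hq2, ?_, ?_⟩ <;>
              simp only [hp3, hp4, hq3, hq4, ne_eq, Option.some.injEq, hcc, hbu, hbv,
                hba, hba', hbp, hbq] <;> decide
          · -- u-a'-q-v
            obtain ⟨Q, hq1, hq2, hq3, hq4⟩ := exists_walk3 c
              (hA (by rw [hfa']; exact hfi)) hAa'q
              (hA (by rw [hfq]; exact fun e => hvfj2 e.symm))
              (hbne (by rw [hbu, hbq]; decide)) huv (hbne (by rw [hba', hbv]; decide))
              (by simp only [hcc, hbu, hba', hbq]; decide)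
              (by simp only [hcc, hba', hbq, hbv]; decide)
            refine ⟨P, Q, hp1, hp2, hq1, hq2, ?_, ?_⟩ <;>
              simp only [hp3, hp4, hq3, hq4, ne_eq, Option.some.injEq, hcc, hbu, hbv,
                hba, hba', hbp, hbq] <;> decide
        · have hbv : b v = 1 := hbuv.symm.trans hbu
          have hvfj1 : f v ≠ j1 := by
            rcases hb1 v hbv with rfl | h
            · rw [hfa']; exact hi0j1
            · rw [h]; exact hj2.2
          by_cases hfi : f u = i0
          · -- u-p-a-v
            have hfvi : f v ≠ i0 := by rw [← hfi]; exact hfvu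
            obtain ⟨Q, hq1, hq2, hq3, hq4⟩ := exists_walk3 c
              (hA (by rw [hfi, hfp]; exact hi0j1)) hApa
              (hA (by rw [hfa]; exact fun e => hfvi e.symm))
              (hbne (by rw [hbu, hba]; decide)) huv (hbne (by rw [hbp, hbv]; decide))
              (by simp only [hcc, hbu, hbp, hba]; decide)
              (by simp only [hcc, hbp, hba, hbv]; decide)
            refine ⟨P, Q, hp1, hp2, hq1, hq2, ?_, ?_⟩ <;>
              simp only [hp3, hp4, hq3, hq4, ne_eq, Option.some.injEq, hcc, hbu, hbv,
                hba, hba', hbp, hbq] <;> decide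
          · -- u-a-p-v
            obtain ⟨Q, hq1, hq2, hq3, hq4⟩ := exists_walk3 c
              (hA (by rw [hfa]; exact hfi)) hAap
              (hA (by rw [hfp]; exact fun e => hvfj1 e.symm))
              (hbne (by rw [hbu, hbp]; decide)) huv (hbne (by rw [hba, hbv]; decide))
              (by simp only [hcc, hbu, hba, hbp]; decide)
              (by simp only [hcc, hba, hbp, hbv]; decide)
            refine ⟨P, Q, hp1, hp2, hq1, hq2, ?_, ?_⟩ <;>
              simp only [hp3, hp4, hq3, hq4, ne_eq, Option.some.injEq, hcc, hbu, hbv,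
                hba, hba', hbp, hbq] <;> decide
      · -- different parts, different bits
        rcases fin2cases (b u) with hbu | hbu <;>
        [ have hbv : b v = 1 := ((fin2cases (b v)).resolve_left
            (fun h => hbuv (hbu.trans h.symm)));
          have hbv : b v = 0 := ((fin2cases (b v)).resolve_right
            (fun h => hbuv (hbu.trans h.symm)))]
        · by_cases hfu : f u = i0
          · -- edge + u-p-a'-v
            have hfvi : f v ≠ i0 := by rw [← hfu]; exact hfvu
            obtain ⟨P, hp1, hp2, hp3, hp4⟩ := exists_walk1 c (hA hfuv)
            obtain ⟨Q, hq1, hq2, hq3, hq4⟩ := exists_walk3 c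
              (hA (by rw [hfu, hfp]; exact hi0j1)) hApa'
              (hA (by rw [hfa']; exact fun e => hfvi e.symm))
              (hbne (by rw [hbu, hba']; decide)) huv (hbne (by rw [hbp, hbv]; decide))
              (by simp only [hcc, hbu, hbp, hba']; decide)
              (by simp only [hcc, hbp, hba', hbv]; decide)
            refine ⟨P, Q, hp1, hp2, hq1, hq2, ?_, ?_⟩ <;>
              simp only [hp3, hp4, hq3, hq4, ne_eq, Option.some.injEq, hcc, hbu, hbv,
                hba, hba', hbp, hbq] <;> decide
          · by_cases hfv : f v = i0
            · -- edge + u-a-q-v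
              obtain ⟨P, hp1, hp2, hp3, hp4⟩ := exists_walk1 c (hA hfuv)
              obtain ⟨Q, hq1, hq2, hq3, hq4⟩ := exists_walk3 c
                (hA (by rw [hfa]; exact hfu)) hAaq
                (hA (by rw [hfq, hfv]; exact hj2.1))
                (hbne (by rw [hbu, hbq]; decide)) huv (hbne (by rw [hba, hbv]; decide))
                (by simp only [hcc, hbu, hba, hbq]; decide)
                (by simp only [hcc, hba, hbq, hbv]; decide)
              refine ⟨P, Q, hp1, hp2, hq1, hq2, ?_, ?_⟩ <;>
                simp only [hp3, hp4, hq3, hq4, ne_eq, Option.some.injEq, hcc, hbu, hbv,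
                  hba, hba', hbp, hbq] <;> decide
            · -- u-a-v and u-a'-v
              obtain ⟨P, hp1, hp2, hp3, hp4⟩ := exists_walk2 c
                (hA (by rw [hfa]; exact hfu)) (hA (by rw [hfa]; exact fun e => hfv e.symm))
                huv (by simp only [hcc, hbu, hba, hbv]; decide)
              obtain ⟨Q, hq1, hq2, hq3, hq4⟩ := exists_walk2 c
                (hA (by rw [hfa']; exact hfu)) (hA (by rw [hfa']; exact fun e => hfv e.symm))
                huv (by simp only [hcc, hbu, hba', hbv]; decide)
              refine ⟨P, Q, hp1, hp2, hq1, hq2, ?_, ?_⟩ <;>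
                simp only [hp3, hp4, hq3, hq4, ne_eq, Option.some.injEq, hcc, hbu, hbv,
                  hba, hba', hbp, hbq] <;> decide
        · by_cases hfu : f u = i0
          · -- edge + u-q-a-v
            have hfvi : f v ≠ i0 := by rw [← hfu]; exact hfvu
            obtain ⟨P, hp1, hp2, hp3, hp4⟩ := exists_walk1 c (hA hfuv)
            obtain ⟨Q, hq1, hq2, hq3, hq4⟩ := exists_walk3 c
              (hA (by rw [hfu, hfq]; exact hi0j2)) hAqa
              (hA (by rw [hfa]; exact fun e => hfvi e.symm))
              (hbne (by rw [hbu, hba]; decide)) huv (hbne (by rw [hbq, hbv]; decide))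
              (by simp only [hcc, hbu, hbq, hba]; decide)
              (by simp only [hcc, hbq, hba, hbv]; decide)
            refine ⟨P, Q, hp1, hp2, hq1, hq2, ?_, ?_⟩ <;>
              simp only [hp3, hp4, hq3, hq4, ne_eq, Option.some.injEq, hcc, hbu, hbv,
                hba, hba', hbp, hbq] <;> decide
          · by_cases hfv : f v = i0
            · -- edge + u-a'-p-v
              obtain ⟨P, hp1, hp2, hp3, hp4⟩ := exists_walk1 c (hA hfuv)
              obtain ⟨Q, hq1, hq2, hq3, hq4⟩ := exists_walk3 c
                (hA (by rw [hfa']; exact hfu)) hAa'p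
                (hA (by rw [hfp, hfv]; exact hj1))
                (hbne (by rw [hbu, hbp]; decide)) huv (hbne (by rw [hba', hbv]; decide))
                (by simp only [hcc, hbu, hba', hbp]; decide)
                (by simp only [hcc, hba', hbp, hbv]; decide)
              refine ⟨P, Q, hp1, hp2, hq1, hq2, ?_, ?_⟩ <;>
                simp only [hp3, hp4, hq3, hq4, ne_eq, Option.some.injEq, hcc, hbu, hbv,
                  hba, hba', hbp, hbq] <;> decide
            · -- u-a-v and u-a'-v
              obtain ⟨P, hp1, hp2, hp3, hp4⟩ := exists_walk2 c
                (hA (by rw [hfa]; exact hfu)) (hA (by rw [hfa]; exact fun e => hfv e.symm))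
                huv (by simp only [hcc, hbu, hba, hbv]; decide)
              obtain ⟨Q, hq1, hq2, hq3, hq4⟩ := exists_walk2 c
                (hA (by rw [hfa']; exact hfu)) (hA (by rw [hfa']; exact fun e => hfv e.symm))
                huv (by simp only [hcc, hbu, hba', hbv]; decide)
              refine ⟨P, Q, hp1, hp2, hq1, hq2, ?_, ?_⟩ <;>
                simp only [hp3, hp4, hq3, hq4, ne_eq, Option.some.injEq, hcc, hbu, hbv,
                  hba, hba', hbp, hbq] <;> decide
  have hppc : IsProperPathColoring G c := by
    intro u v huv
    obtain ⟨P, _, h1, h2, _⟩ := hstrong u v huv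
    exact ⟨P, h1, h2⟩
  have hmem : (2 : ℕ) ∈ {k : ℕ | ∃ c : Sym2 V → Fin k, IsProperPathColoring G c} := ⟨c, hppc⟩
  refine ⟨le_antisymm (Nat.sInf_le hmem) (le_csInf ⟨2, hmem⟩ ?_), c, hppc, hstrong⟩
  rintro m ⟨cm, hcm⟩
  by_contra hlt
  push_neg at hlt
  interval_cases m
  · exact (cm s(a, a')).elim0
  · obtain ⟨pw, _, hchain⟩ := hcm a a' haa'
    have hnadj : ¬ G.Adj a a' := by rw [hadj, hfa, hfa']; simp
    cases pw with
    | nil => exact haa' rfl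
    | cons h pw' =>
      cases pw' with
      | nil => exact hnadj h
      | cons h' pw'' =>
        rw [Walk.edges_cons, Walk.edges_cons, List.map_cons, List.map_cons,
          List.Chain', List.isChain_cons_cons] at hchain
        exact hchain.1 (Subsingleton.elim _ _)
end

section
/- If G is a connected simple graph with diameter diam(G) ≥ 4, then its complement Ḡ is connected and pc(Ḡ) = 2. -/
open SimpleGraph

open Classical in
noncomputable def dsc {V : Type*} (u v : V) : Sym2 V → Fin 2 :=
  fun e => if e = s(u,v) then 0 else if u ∈ e ∨ v ∈ e then 1 else 0

lemma dsc_uv {V : Type*} (u v : V) : dsc u v s(u,v) = 0 := by simp [dsc]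

lemma dsc_vu {V : Type*} (u v : V) : dsc u v s(v,u) = 0 := by
  rw [Sym2.eq_swap]; simp [dsc]

lemma dsc_u {V : Type*} {u v x : V} (huv : u ≠ v) (h : x ≠ v) : dsc u v s(u,x) = 1 := by
  simp [dsc, Sym2.eq_iff, h, huv]

lemma dsc_u' {V : Type*} {u v x : V} (huv : u ≠ v) (h : x ≠ v) : dsc u v s(x,u) = 1 := by
  rw [Sym2.eq_swap]; exact dsc_u huv h

lemma dsc_v {V : Type*} {u v x : V} (huv : u ≠ v) (h : x ≠ u) : dsc u v s(v,x) = 1 := by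
  simp [dsc, Sym2.eq_iff, h, huv.symm]

lemma dsc_v' {V : Type*} {u v x : V} (huv : u ≠ v) (h : x ≠ u) : dsc u v s(x,v) = 1 := by
  rw [Sym2.eq_swap]; exact dsc_v huv h

lemma dsc_other {V : Type*} {u v a b : V} (h1 : a ≠ u) (h2 : a ≠ v) (h3 : b ≠ u) (h4 : b ≠ v) :
    dsc u v s(a,b) = 0 := by
  simp [dsc, Sym2.eq_iff, Sym2.mem_iff, h1, h2, h3, h4, h1.symm, h2.symm, h3.symm, h4.symm]

lemma ppc_path1 {V : Type*} {H : SimpleGraph V} {k : ℕ} (c : Sym2 V → Fin k) {x y : V}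
    (h1 : H.Adj x y) :
    ∃ p : H.Walk x y, p.IsPath ∧ (p.edges.map c).Chain' (· ≠ ·) := by
  exact ⟨.cons h1 .nil, by simp [Walk.isPath_def, h1.ne], by simp [List.Chain']⟩

lemma ppc_path2 {V : Type*} {H : SimpleGraph V} {k : ℕ} (c : Sym2 V → Fin k) {x z y : V}
    (h1 : H.Adj x z) (h2 : H.Adj z y) (hxy : x ≠ y)
    (hc : c s(x,z) ≠ c s(z,y)) :
    ∃ p : H.Walk x y, p.IsPath ∧ (p.edges.map c).Chain' (· ≠ ·) := by
  refine ⟨.cons h1 (.cons h2 .nil), ?_, ?_⟩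
  · simp [Walk.isPath_def, h1.ne, h2.ne, hxy]
  · simp [List.Chain', hc]

lemma ppc_path3 {V : Type*} {H : SimpleGraph V} {k : ℕ} (c : Sym2 V → Fin k) {x z w y : V}
    (h1 : H.Adj x z) (h2 : H.Adj z w) (h3 : H.Adj w y)
    (hxw : x ≠ w) (hxy : x ≠ y) (hzy : z ≠ y)
    (hc1 : c s(x,z) ≠ c s(z,w)) (hc2 : c s(z,w) ≠ c s(w,y)) :
    ∃ p : H.Walk x y, p.IsPath ∧ (p.edges.map c).Chain' (· ≠ ·) := by
  refine ⟨.cons h1 (.cons h2 (.cons h3 .nil)), ?_, ?_⟩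
  · simp [Walk.isPath_def, h1.ne, h2.ne, h3.ne, hxw, hxy, hzy]
  · simp [List.Chain', hc1, hc2]

lemma ppc_path4 {V : Type*} {H : SimpleGraph V} {k : ℕ} (c : Sym2 V → Fin k) {x z w t y : V}
    (h1 : H.Adj x z) (h2 : H.Adj z w) (h3 : H.Adj w t) (h4 : H.Adj t y)
    (hxw : x ≠ w) (hxt : x ≠ t) (hxy : x ≠ y) (hzt : z ≠ t) (hzy : z ≠ y) (hwy : w ≠ y)
    (hc1 : c s(x,z) ≠ c s(z,w)) (hc2 : c s(z,w) ≠ c s(w,t)) (hc3 : c s(w,t) ≠ c s(t,y)) :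
    ∃ p : H.Walk x y, p.IsPath ∧ (p.edges.map c).Chain' (· ≠ ·) := by
  refine ⟨.cons h1 (.cons h2 (.cons h3 (.cons h4 .nil))), ?_, ?_⟩
  · simp [Walk.isPath_def, h1.ne, h2.ne, h3.ne, h4.ne, hxw, hxt, hxy, hzt, hzy, hwy]
  · simp [List.Chain', hc1, hc2, hc3]


lemma main_coloring {V : Type*} (G : SimpleGraph V) {u v a b : V}
    (hau : G.Adj u a) (hbv : G.Adj v b)
    (hne : u ≠ v) (huv : ¬G.Adj u v)
    (hA : ∀ x, G.Adj u x → ¬G.Adj v x ∧ x ≠ v)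
    (hAB : ∀ x y, G.Adj u x → G.Adj v y → ¬G.Adj x y) :
    IsProperPathColoring Gᶜ (dsc u v) := by
  have hB : ∀ x, G.Adj v x → ¬G.Adj u x ∧ x ≠ u := fun x hx =>
    ⟨fun h => (hA x h).1 hx, fun h => huv ((h ▸ hx).symm)⟩
  set c := dsc u v with hc
  have cuv : Gᶜ.Adj u v := (G.compl_adj u v).mpr ⟨hne, huv⟩
  intro x y hxy
  by_cases hadj : Gᶜ.Adj x y
  · exact ppc_path1 _ hadj
  have hGxy : G.Adj x y := by
    by_contra h; exact hadj ((G.compl_adj x y).mpr ⟨hxy, h⟩)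
  by_cases hxu : x = u
  · -- x = u, so y ∈ A; path u - v - y
    subst hxu
    have hyA : G.Adj x y := hGxy
    have h2 : Gᶜ.Adj v y := (G.compl_adj v y).mpr ⟨(hA y hyA).2.symm.symm |>.symm, (hA y hyA).1⟩
    refine ppc_path2 c cuv h2 hxy ?_
    rw [hc, dsc_uv, dsc_v hne hyA.ne']
    decide
  by_cases hyu : y = u
  · subst hyu
    have hxA : G.Adj y x := hGxy.symm
    have h1 : Gᶜ.Adj x v := (G.compl_adj x v).mpr ⟨(hA x hxA).2, fun h => (hA x hxA).1 h.symm⟩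
    refine ppc_path2 c h1 cuv.symm hxy ?_
    rw [hc, dsc_v' hne hxA.ne', dsc_vu]
    decide
  by_cases hxv : x = v
  · subst hxv
    have hyB : G.Adj x y := hGxy
    have h2 : Gᶜ.Adj u y := (G.compl_adj u y).mpr ⟨(hB y hyB).2.symm, (hB y hyB).1⟩
    refine ppc_path2 c cuv.symm h2 hxy ?_
    rw [hc, dsc_vu, dsc_u hne hxy.symm]
    decide
  by_cases hyv : y = v
  · subst hyv
    have hxB : G.Adj y x := hGxy.symm
    have h1 : Gᶜ.Adj x u := (G.compl_adj x u).mpr ⟨(hB x hxB).2, fun h => (hB x hxB).1 h.symm⟩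
    refine ppc_path2 c h1 cuv hxy ?_
    rw [hc, dsc_u' hne hxy, dsc_uv]
    decide
  -- now x, y ∉ {u, v}
  by_cases hxA : G.Adj u x
  · by_cases hyA : G.Adj u y
    · -- both in A : path x - v - u - b - y
      have hbx : b ≠ x := fun h => (hB b hbv).1 (h ▸ hxA)
      have hby : b ≠ y := fun h => (hB b hbv).1 (h ▸ hyA)
      refine ppc_path4 c
        ((G.compl_adj x v).mpr ⟨hxv, fun h => (hA x hxA).1 h.symm⟩)
        cuv.symm
        ((G.compl_adj u b).mpr ⟨Ne.symm (hB b hbv).2, (hB b hbv).1⟩)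
        ((G.compl_adj b y).mpr ⟨hby, fun h => hAB y b hyA hbv h.symm⟩)
        hxu hbx.symm hxy hbv.ne (Ne.symm hyv) (Ne.symm hyu) ?_ ?_ ?_
      · rw [hc, dsc_v' hne hxA.ne', dsc_vu]; decide
      · rw [hc, dsc_vu, dsc_u hne hbv.ne']; decide
      · rw [hc, dsc_u hne hbv.ne', dsc_other (hB b hbv).2 hbv.ne' hyu hyv]; decide
    · -- x ∈ A, y ∉ A; y ∈ B impossible (G.Adj x y); so path x - v - u - y
      have hyB : ¬G.Adj v y := fun h => hAB x y hxA h hGxy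
      refine ppc_path3 c
        ((G.compl_adj x v).mpr ⟨hxv, fun h => (hA x hxA).1 h.symm⟩)
        cuv.symm
        ((G.compl_adj u y).mpr ⟨Ne.symm hyu, hyA⟩)
        hxu hxy (Ne.symm hyv) ?_ ?_
      · rw [hc, dsc_v' hne hxA.ne', dsc_vu]; decide
      · rw [hc, dsc_vu, dsc_u hne hyv]; decide
  · by_cases hyA : G.Adj u y
    · -- y ∈ A, x ∉ A; x ∈ B impossible; path x - u - v - y
      have hxB : ¬G.Adj v x := fun h => hAB y x hyA h hGxy.symm
      refine ppc_path3 c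
        ((G.compl_adj x u).mpr ⟨hxu, fun h => hxA h.symm⟩)
        cuv
        ((G.compl_adj v y).mpr ⟨Ne.symm hyv, fun h => (hA y hyA).1 h⟩)
        hxv hxy (Ne.symm hyu) ?_ ?_
      · rw [hc, dsc_u' hne hxv, dsc_uv]; decide
      · rw [hc, dsc_uv, dsc_v hne hyu]; decide
    · by_cases hxB : G.Adj v x
      · by_cases hyB : G.Adj v y
        · -- both in B: path x - u - v - a - y
          have hax : a ≠ x := fun h => hxA (h ▸ hau)
          have hay : a ≠ y := fun h => hyA (h ▸ hau)
          refine ppc_path4 c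
            ((G.compl_adj x u).mpr ⟨hxu, fun h => hxA h.symm⟩)
            cuv
            ((G.compl_adj v a).mpr ⟨Ne.symm (hA a hau).2, (hA a hau).1⟩)
            ((G.compl_adj a y).mpr ⟨hay, hAB a y hau hyB⟩)
            hxv hax.symm hxy hau.ne (Ne.symm hyu) (Ne.symm hyv) ?_ ?_ ?_
          · rw [hc, dsc_u' hne hxv, dsc_uv]; decide
          · rw [hc, dsc_uv, dsc_v hne hau.ne']; decide
          · rw [hc, dsc_v hne hau.ne', dsc_other hau.ne' (hA a hau).2 hyu hyv]; decide
        · -- x ∈ B, y ∈ C : path x - u - v - y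
          refine ppc_path3 c
            ((G.compl_adj x u).mpr ⟨hxu, fun h => hxA h.symm⟩)
            cuv
            ((G.compl_adj v y).mpr ⟨Ne.symm hyv, hyB⟩)
            hxv hxy (Ne.symm hyu) ?_ ?_
          · rw [hc, dsc_u' hne hxv, dsc_uv]; decide
          · rw [hc, dsc_uv, dsc_v hne hyu]; decide
      · -- x ∈ C : path x - u - v - y  works if y ∉ B, else x - v - u - y? x∈C so both fine
        by_cases hyB : G.Adj v y
        · refine ppc_path3 c
            ((G.compl_adj x v).mpr ⟨hxv, fun h => hxB h.symm⟩)
            cuv.symm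
            ((G.compl_adj u y).mpr ⟨Ne.symm hyu, hyA⟩)
            hxu hxy (Ne.symm hyv) ?_ ?_
          · rw [hc, dsc_v' hne hxu, dsc_vu]; decide
          · rw [hc, dsc_vu, dsc_u hne hyv]; decide
        · refine ppc_path3 c
            ((G.compl_adj x u).mpr ⟨hxu, fun h => hxA h.symm⟩)
            cuv
            ((G.compl_adj v y).mpr ⟨Ne.symm hyv, hyB⟩)
            hxv hxy (Ne.symm hyu) ?_ ?_
          · rw [hc, dsc_u' hne hxv, dsc_uv]; decide
          · rw [hc, dsc_uv, dsc_v hne hyu]; decide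


/-- If `G` is connected with diameter at least 4, then its complement is connected and has
proper connection number 2. -/
theorem pc_compl_of_diam_ge_four {V : Type*} [Fintype V] (G : SimpleGraph V)
    (hG : G.Connected) (hd : 4 ≤ G.diam) :
    Gᶜ.Connected ∧ pc Gᶜ = 2 := by
  unfold pc
  have hd0 : G.diam ≠ 0 := by omega
  have hnt : Nontrivial V := G.nontrivial_of_diam_ne_zero hd0
  obtain ⟨u, v, huvd⟩ := G.exists_dist_eq_diam
  have h4 : 4 ≤ G.dist u v := huvd ▸ hd
  have hne : u ≠ v := by rintro rfl; simp [SimpleGraph.dist_self] at h4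
  obtain ⟨a, hau⟩ : ∃ a, G.Adj u a := by
    obtain ⟨p⟩ := hG.preconnected u v
    cases p with
    | nil => exact absurd rfl hne
    | cons h q => exact ⟨_, h⟩
  obtain ⟨b, hbv⟩ : ∃ b, G.Adj v b := by
    obtain ⟨p⟩ := hG.preconnected v u
    cases p with
    | nil => exact absurd rfl hne.symm
    | cons h q => exact ⟨_, h⟩
  have huv' : ¬G.Adj u v := by
    intro h
    have := G.dist_le (Walk.cons h Walk.nil)
    simp at this; omega
  have hA : ∀ x, G.Adj u x → ¬G.Adj v x ∧ x ≠ v := by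
    intro x hx
    constructor
    · intro h
      have := G.dist_le (Walk.cons hx (Walk.cons h.symm Walk.nil))
      simp at this; omega
    · rintro rfl
      have := G.dist_le (Walk.cons hx Walk.nil)
      simp at this; omega
  have hAB : ∀ x y, G.Adj u x → G.Adj v y → ¬G.Adj x y := by
    intro x y hx hy h
    have := G.dist_le (Walk.cons hx (Walk.cons h (Walk.cons hy.symm Walk.nil)))
    simp at this; omega
  have hppc := main_coloring G hau hbv hne huv' hA hAB
  have hconn : Gᶜ.Connected := by
    rw [connected_iff]
    refine ⟨fun x y => ?_, ⟨u⟩⟩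
    by_cases h : x = y
    · subst h; exact Reachable.refl x
    · obtain ⟨p, _, _⟩ := hppc x y h
      exact ⟨p⟩
  refine ⟨hconn, ?_⟩
  have h2 : 2 ∈ {k : ℕ | ∃ c : Sym2 V → Fin k, IsProperPathColoring Gᶜ c} := ⟨dsc u v, hppc⟩
  refine le_antisymm (Nat.sInf_le h2) (le_csInf ⟨2, h2⟩ ?_)
  rintro k ⟨c, hc⟩
  by_contra hk
  have hk01 : k = 0 ∨ k = 1 := by omega
  rcases hk01 with rfl | rfl
  · exact (c s(u,u)).elim0
  · obtain ⟨p, hp, hchain⟩ := hc u a hau.ne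
    cases p with
    | nil => exact hau.ne rfl
    | cons h q =>
      cases q with
      | nil => exact ((G.compl_adj u a).mp h).2 hau
      | cons h' q' =>
        rw [Walk.edges_cons, Walk.edges_cons, List.map_cons, List.map_cons,
          List.Chain', List.isChain_cons_cons] at hchain
        exact hchain.1 (Subsingleton.elim _ _)
end

section
/- Let G be a connected simple graph that is not complete. Suppose that neither of the following holds: (i) Ḡ is connected with diameter 2 or 3; (ii) Ḡ has exactly two connected components, one of which is a single vertex. Then pc(G) = 2. -/
open SimpleGraph

section Helpers

variable {V : Type*} {G : SimpleGraph V}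

private lemma W1 {x y : V} (c : Sym2 V → Fin 2) (h : G.Adj x y) :
    ∃ p : G.Walk x y, p.IsPath ∧ ((Walk.edges p).map c).Chain' (· ≠ ·) :=
  ⟨Walk.cons h Walk.nil, by simp [h.ne], by simp [List.Chain']⟩

private lemma W2 {x y z : V} (c : Sym2 V → Fin 2)
    (h1 : G.Adj x y) (h2 : G.Adj y z) (hxz : x ≠ z)
    (hc : c s(x, y) ≠ c s(y, z)) :
    ∃ p : G.Walk x z, p.IsPath ∧ ((Walk.edges p).map c).Chain' (· ≠ ·) :=
  ⟨Walk.cons h1 (Walk.cons h2 Walk.nil),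
    by simp [Walk.cons_isPath_iff, h1.ne, h2.ne, hxz], by simp [List.Chain', hc]⟩

private lemma W4 {x a b d y : V} (c : Sym2 V → Fin 2)
    (h1 : G.Adj x a) (h2 : G.Adj a b) (h3 : G.Adj b d) (h4 : G.Adj d y)
    (n2 : x ≠ b) (n3 : x ≠ d) (n4 : x ≠ y) (n6 : a ≠ d) (n7 : a ≠ y) (n9 : b ≠ y)
    (hc1 : c s(x, a) ≠ c s(a, b)) (hc2 : c s(a, b) ≠ c s(b, d))
    (hc3 : c s(b, d) ≠ c s(d, y)) :
    ∃ p : G.Walk x y, p.IsPath ∧ ((Walk.edges p).map c).Chain' (· ≠ ·) :=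
  ⟨Walk.cons h1 (Walk.cons h2 (Walk.cons h3 (Walk.cons h4 Walk.nil))),
    by simp [Walk.cons_isPath_iff, h1.ne, h2.ne, h3.ne, h4.ne, n2, n3, n4, n6, n7, n9],
    by simp [List.Chain', hc1, hc2, hc3]⟩

private lemma W5 {x a b d e y : V} (c : Sym2 V → Fin 2)
    (h1 : G.Adj x a) (h2 : G.Adj a b) (h3 : G.Adj b d) (h4 : G.Adj d e) (h5 : G.Adj e y)
    (n2 : x ≠ b) (n3 : x ≠ d) (n4 : x ≠ e) (n5 : x ≠ y)
    (n6 : a ≠ d) (n7 : a ≠ e) (n8 : a ≠ y) (n9 : b ≠ e) (n10 : b ≠ y) (n11 : d ≠ y)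
    (hc1 : c s(x, a) ≠ c s(a, b)) (hc2 : c s(a, b) ≠ c s(b, d))
    (hc3 : c s(b, d) ≠ c s(d, e)) (hc4 : c s(d, e) ≠ c s(e, y)) :
    ∃ p : G.Walk x y, p.IsPath ∧ ((Walk.edges p).map c).Chain' (· ≠ ·) :=
  ⟨Walk.cons h1 (Walk.cons h2 (Walk.cons h3 (Walk.cons h4 (Walk.cons h5 Walk.nil)))),
    by simp [Walk.cons_isPath_iff, h1.ne, h2.ne, h3.ne, h4.ne, h5.ne,
      n2, n3, n4, n5, n6, n7, n8, n9, n10, n11],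
    by simp [List.Chain', hc1, hc2, hc3, hc4]⟩

/-- The key combinatorial lemma: if `V` splits into sets `A`, `B` (each with two
distinguished vertices) with all `A`–`B` pairs adjacent, and every vertex outside
`A ∪ B` is adjacent to `u ∈ A` and `z ∈ B`, then `G` has a proper-path 2-coloring. -/
lemma key_coloring (G : SimpleGraph V) (A B : Set V) (u a0 z b0 : V)
    (huA : u ∈ A) (ha0 : a0 ∈ A) (hzB : z ∈ B) (hb0 : b0 ∈ B)
    (hua0 : u ≠ a0) (hzb0 : z ≠ b0)
    (hAB : ∀ a ∈ A, ∀ b ∈ B, G.Adj a b)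
    (hC : ∀ v, v ∉ A → v ∉ B → G.Adj u v ∧ G.Adj z v) :
    ∃ c : Sym2 V → Fin 2, IsProperPathColoring G c := by
  classical
  have hdisj : ∀ v, v ∈ A → v ∈ B → False := fun v hA hB => (hAB v hA v hB).ne rfl
  set f : V → Fin 2 := fun v => if v = u ∨ v = z ∨ (v ∉ A ∧ v ∉ B) then 1 else 0 with hf
  refine ⟨Sym2.lift ⟨fun x y => f x + f y, fun x y => add_comm _ _⟩, ?_⟩
  set c : Sym2 V → Fin 2 := Sym2.lift ⟨fun x y => f x + f y, fun x y => add_comm _ _⟩ with hcdef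
  have hcol : ∀ x y : V, c s(x, y) = f x + f y := fun x y => rfl
  have hfu : f u = 1 := by simp [hf]
  have hfz : f z = 1 := by simp [hf]
  have hfA : ∀ a ∈ A, a ≠ u → f a = 0 := by
    intro a haA hau
    have haz : a ≠ z := fun h => hdisj a haA (h ▸ hzB)
    simp [hf, hau, haz, haA]
  have hfB : ∀ b ∈ B, b ≠ z → f b = 0 := by
    intro b hbB hbz
    have hbu : b ≠ u := fun h => hdisj b (h ▸ huA) hbB
    simp [hf, hbu, hbz, hbB]
  have hfC : ∀ v, v ∉ A → v ∉ B → f v = 1 := by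
    intro v hvA hvB; simp [hf, hvA, hvB]
  intro x y hxy
  by_cases hxA : x ∈ A
  · by_cases hyA : y ∈ A
    · -- both in A
      by_cases hxu : x = u
      · have hyu : y ≠ u := fun h => hxy (hxu.trans h.symm)
        have hfx : f x = 1 := by rw [hxu]; exact hfu
        exact W2 c (hAB x hxA z hzB) (hAB y hyA z hzB).symm hxy
          (by rw [hcol, hcol, hfx, hfz, hfA y hyA hyu]; decide)
      · by_cases hyu : y = u
        · have hfy : f y = 1 := by rw [hyu]; exact hfu
          exact W2 c (hAB x hxA z hzB) (hAB y hyA z hzB).symm hxy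
            (by rw [hcol, hcol, hfA x hxA hxu, hfz, hfy]; decide)
        · -- x, y ∈ A, both ≠ u : path x z u b0 y
          have hxb0 : x ≠ b0 := fun h => hdisj x hxA (h ▸ hb0)
          have hzy : z ≠ y := fun h => hdisj y hyA (h ▸ hzB)
          exact W4 c (hAB x hxA z hzB) (hAB u huA z hzB).symm (hAB u huA b0 hb0)
            (hAB y hyA b0 hb0).symm hxu hxb0 hxy hzb0 hzy (fun h => hyu h.symm)
            (by rw [hcol, hcol, hfA x hxA hxu, hfz, hfu]; decide)
            (by rw [hcol, hcol, hfz, hfu, hfB b0 hb0 (Ne.symm hzb0)]; decide)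
            (by rw [hcol, hcol, hfu, hfB b0 hb0 (Ne.symm hzb0), hfA y hyA hyu]; decide)
    · by_cases hyB : y ∈ B
      · exact W1 c (hAB x hxA y hyB)
      · -- y ∈ C, x ∈ A
        by_cases hxu : x = u
        · exact W1 c (hxu ▸ (hC y hyA hyB).1)
        · exact W2 c (hAB x hxA z hzB) (hC y hyA hyB).2 hxy
            (by rw [hcol, hcol, hfA x hxA hxu, hfz, hfC y hyA hyB]; decide)
  · by_cases hxB : x ∈ B
    · by_cases hyA : y ∈ A
      · exact W1 c (hAB y hyA x hxB).symm
      · by_cases hyB : y ∈ B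
        · -- both in B
          by_cases hxz : x = z
          · have hyz : y ≠ z := fun h => hxy (hxz.trans h.symm)
            have hfx : f x = 1 := by rw [hxz]; exact hfz
            exact W2 c (hAB u huA x hxB).symm (hAB u huA y hyB) hxy
              (by rw [hcol, hcol, hfx, hfu, hfB y hyB hyz]; decide)
          · by_cases hyz : y = z
            · have hfy : f y = 1 := by rw [hyz]; exact hfz
              exact W2 c (hAB u huA x hxB).symm (hAB u huA y hyB) hxy
                (by rw [hcol, hcol, hfB x hxB hxz, hfu, hfy]; decide)
            · -- x, y ∈ B, both ≠ z : path x u z a0 y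
              have hxa0 : x ≠ a0 := fun h => hdisj a0 ha0 (h ▸ hxB)
              have huy : u ≠ y := fun h => hdisj y (h ▸ huA) hyB
              exact W4 c (hAB u huA x hxB).symm (hAB u huA z hzB) (hAB a0 ha0 z hzB).symm
                (hAB a0 ha0 y hyB) hxz hxa0 hxy hua0 huy (fun h => hyz h.symm)
                (by rw [hcol, hcol, hfB x hxB hxz, hfu, hfz]; decide)
                (by rw [hcol, hcol, hfu, hfz, hfA a0 ha0 (Ne.symm hua0)]; decide)
                (by rw [hcol, hcol, hfz, hfA a0 ha0 (Ne.symm hua0), hfB y hyB hyz]; decide)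
        · -- x ∈ B, y ∈ C
          by_cases hxz : x = z
          · exact W1 c (hxz ▸ (hC y hyA hyB).2)
          · exact W2 c (hAB u huA x hxB).symm (hC y hyA hyB).1 hxy
              (by rw [hcol, hcol, hfB x hxB hxz, hfu, hfC y hyA hyB]; decide)
    · -- x ∈ C
      by_cases hyA : y ∈ A
      · by_cases hyu : y = u
        · exact W1 c (hyu ▸ (hC x hxA hxB).1).symm
        · exact W2 c (hC x hxA hxB).2.symm (hAB y hyA z hzB).symm hxy
            (by rw [hcol, hcol, hfC x hxA hxB, hfz, hfA y hyA hyu]; decide)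
      · by_cases hyB : y ∈ B
        · by_cases hyz : y = z
          · exact W1 c (hyz ▸ (hC x hxA hxB).2).symm
          · exact W2 c (hC x hxA hxB).1.symm (hAB u huA y hyB) hxy
              (by rw [hcol, hcol, hfC x hxA hxB, hfu, hfB y hyB hyz]; decide)
        · -- both in C : path x z a0 b0 u y
          have hzu : z ≠ u := fun h => hdisj u huA (h ▸ hzB)
          exact W5 c (hC x hxA hxB).2.symm (hAB a0 ha0 z hzB).symm (hAB a0 ha0 b0 hb0)
            (hAB u huA b0 hb0).symm (hC y hyA hyB).1
            (fun h => hxA (h ▸ ha0)) (fun h => hxB (h ▸ hb0)) (fun h => hxA (h ▸ huA)) hxy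
            hzb0 hzu (fun h => hyB (h ▸ hzB)) (Ne.symm hua0) (fun h => hyA (h ▸ ha0))
            (fun h => hyB (h ▸ hb0))
            (by rw [hcol, hcol, hfC x hxA hxB, hfz, hfA a0 ha0 (Ne.symm hua0)]; decide)
            (by rw [hcol, hcol, hfz, hfA a0 ha0 (Ne.symm hua0), hfB b0 hb0 (Ne.symm hzb0)]; decide)
            (by rw [hcol, hcol, hfA a0 ha0 (Ne.symm hua0), hfB b0 hb0 (Ne.symm hzb0), hfu]; decide)
            (by rw [hcol, hcol, hfB b0 hb0 (Ne.symm hzb0), hfu, hfC y hyA hyB]; decide)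


private lemma pc_eq_two_aux {V : Type*} (G : SimpleGraph V) (hnc : G ≠ ⊤)
    (hex : ∃ c : Sym2 V → Fin 2, IsProperPathColoring G c) : pc G = 2 := by
  obtain ⟨x, y, hxy, hnadj⟩ : ∃ x y : V, x ≠ y ∧ ¬ G.Adj x y := by
    by_contra h
    push_neg at h
    apply hnc
    ext a b
    simp only [top_adj]
    exact ⟨fun h' => h'.ne, fun hne => h a b hne⟩
  refine le_antisymm (Nat.sInf_le hex) (le_csInf ⟨2, hex⟩ ?_)
  rintro k ⟨c, hc⟩
  by_contra hk
  push_neg at hk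
  interval_cases k
  · exact (c s(x, y)).elim0
  · obtain ⟨p, hp, hch⟩ := hc x y hxy
    cases p with
    | nil => exact hxy rfl
    | cons h q =>
      cases q with
      | nil => exact hnadj h
      | cons h' q' =>
        rw [Walk.edges_cons, Walk.edges_cons, List.map_cons, List.map_cons,
          List.Chain', List.isChain_cons_cons] at hch
        exact hch.1 (Subsingleton.elim _ _)

private lemma dist_levels {V : Type*} {H : SimpleGraph V} (hH : H.Connected) :
    ∀ (n : ℕ) (u w : V), H.dist u w = n → ∀ i, i ≤ n →
      ∃ x, H.dist u x = i ∧ H.dist x w = n - i := by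
  intro n
  induction n with
  | zero =>
    intro u w h i hi
    interval_cases i
    exact ⟨u, SimpleGraph.dist_self, by simpa using h⟩
  | succ m ih =>
    intro u w h i hi
    obtain ⟨p, hp⟩ := hH.exists_walk_length_eq_dist u w
    cases p with
    | nil => rw [h] at hp; simp at hp
    | @cons _ v _ hadj q =>
      rw [Walk.length_cons, h] at hp
      have hq : q.length = m := by omega
      have hduv : H.dist u v = 1 := SimpleGraph.dist_eq_one_iff_adj.mpr hadj
      have hvw : H.dist v w = m := by
        have hle : H.dist v w ≤ m := hq ▸ SimpleGraph.dist_le q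
        have htri : H.dist u w ≤ H.dist u v + H.dist v w := hH.dist_triangle
        rw [h, hduv] at htri
        omega
      cases i with
      | zero => exact ⟨u, SimpleGraph.dist_self, by simpa using h⟩
      | succ j =>
        obtain ⟨x, hx1, hx2⟩ := ih v w hvw j (by omega)
        refine ⟨x, ?_, ?_⟩
        · have hle : H.dist u x ≤ j + 1 := by
            have := hH.dist_triangle (u := u) (v := v) (w := x)
            rw [hduv, hx1] at this
            omega
          have hge : m + 1 ≤ H.dist u x + H.dist x w := by
            have := hH.dist_triangle (u := u) (v := x) (w := w)
            rw [h] at this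
            omega
          omega
        · rw [hx2]; omega

end Helpers

/-- Let `G` be connected and noncomplete. If it is not the case that `Gᶜ` is connected with
diameter 2 or 3, and not the case that `Gᶜ` has exactly two connected components one of which
is a single vertex, then `pc G = 2`. -/
theorem pc_eq_two_of_compl_not_exceptional {V : Type*} [Fintype V] (G : SimpleGraph V)
    (hG : G.Connected) (hnc : G ≠ ⊤)
    (h1 : ¬ (Gᶜ.Connected ∧ (Gᶜ.diam = 2 ∨ Gᶜ.diam = 3)))
    (h2 : ¬ (Nat.card Gᶜ.ConnectedComponent = 2 ∧ ∃ v : V, ∀ w : V, ¬ Gᶜ.Adj v w)) :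
    pc G = 2 := by
  classical
  obtain ⟨x, y, hxy, hnadj⟩ : ∃ x y : V, x ≠ y ∧ ¬ G.Adj x y := by
    by_contra h
    push_neg at h
    apply hnc
    ext a b
    simp only [top_adj]
    exact ⟨fun h' => h'.ne, fun hne => h a b hne⟩
  have : Nonempty V := ⟨x⟩
  by_cases hcon : Gᶜ.Connected
  · -- Gᶜ connected, so its diameter is at least 4
    have hne23 : ¬ (Gᶜ.diam = 2 ∨ Gᶜ.diam = 3) := fun hd => h1 ⟨hcon, hd⟩
    push_neg at hne23
    -- G has an edge
    obtain ⟨a, b, hab⟩ : ∃ a b : V, G.Adj a b := by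
      obtain ⟨p⟩ := hG.preconnected x y
      cases p with
      | nil => exact absurd rfl hxy
      | cons h _ => exact ⟨_, _, h⟩
    have hedtop : Gᶜ.ediam ≠ ⊤ := by
      obtain ⟨u0, v0, huv⟩ := Gᶜ.exists_edist_eq_ediam_of_finite
      rw [← huv]
      exact SimpleGraph.edist_ne_top_iff_reachable.mpr (hcon.preconnected u0 v0)
    have hd2 : 2 ≤ Gᶜ.diam := by
      have h0 : Gᶜ.dist a b ≠ 0 := fun hh => hab.ne (hcon.dist_eq_zero_iff.mp hh)
      have h1' : Gᶜ.dist a b ≠ 1 := by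
        intro hh
        exact ((G.compl_adj a b).mp (SimpleGraph.dist_eq_one_iff_adj.mp hh)).2 hab
      have := SimpleGraph.dist_le_diam hedtop (u := a) (v := b)
      omega
    have hd4 : 4 ≤ Gᶜ.diam := by omega
    obtain ⟨u, w, huw⟩ := Gᶜ.exists_dist_eq_diam
    obtain ⟨x1, hx1, -⟩ := dist_levels hcon _ u w huw 1 (by omega)
    obtain ⟨x3, hx3, -⟩ := dist_levels hcon _ u w huw 3 (by omega)
    obtain ⟨x4, hx4, -⟩ := dist_levels hcon _ u w huw 4 (by omega)
    have hdu : Gᶜ.dist u u = 0 := SimpleGraph.dist_self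
    apply pc_eq_two_aux G hnc
    apply key_coloring G {v | Gᶜ.dist u v ≤ 1} {v | 3 ≤ Gᶜ.dist u v} u x1 x4 x3
    · show Gᶜ.dist u u ≤ 1
      omega
    · show Gᶜ.dist u x1 ≤ 1
      omega
    · show 3 ≤ Gᶜ.dist u x4
      omega
    · show 3 ≤ Gᶜ.dist u x3
      omega
    · intro h
      rw [← h] at hx1
      omega
    · intro h
      rw [h] at hx4
      omega
    · intro p hp q hq
      simp only [Set.mem_setOf_eq] at hp hq
      have hpq : p ≠ q := fun h => by rw [h] at hp; omega
      have hnadjpq : ¬ Gᶜ.Adj p q := by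
        intro hadj
        have htri : Gᶜ.dist u q ≤ Gᶜ.dist u p + Gᶜ.dist p q := hcon.dist_triangle
        rw [SimpleGraph.dist_eq_one_iff_adj.mpr hadj] at htri
        omega
      by_contra hna
      exact hnadjpq ((G.compl_adj p q).mpr ⟨hpq, hna⟩)
    · intro v hvA hvB
      simp only [Set.mem_setOf_eq] at hvA hvB
      have hv2 : Gᶜ.dist u v = 2 := by omega
      constructor
      · have huv : u ≠ v := fun h => by rw [← h] at hv2; omega
        have hnadjuv : ¬ Gᶜ.Adj u v := by
          intro hadj
          rw [SimpleGraph.dist_eq_one_iff_adj.mpr hadj] at hv2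
          omega
        by_contra hna
        exact hnadjuv ((G.compl_adj u v).mpr ⟨huv, hna⟩)
      · have hx4v : x4 ≠ v := fun h => by rw [h] at hx4; omega
        have hnadjx4v : ¬ Gᶜ.Adj x4 v := by
          intro hadj
          have htri : Gᶜ.dist u x4 ≤ Gᶜ.dist u v + Gᶜ.dist v x4 := hcon.dist_triangle
          rw [SimpleGraph.dist_comm (u := v) (v := x4),
            SimpleGraph.dist_eq_one_iff_adj.mpr hadj, hv2] at htri
          omega
        by_contra hna
        exact hnadjx4v ((G.compl_adj x4 v).mpr ⟨hx4v, hna⟩)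
  · -- Gᶜ disconnected
    obtain ⟨p0, q0, hpq⟩ : ∃ p q : V, Gᶜ.Adj p q := by
      by_contra hno
      push_neg at hno
      apply hnc
      ext p q
      simp only [top_adj]
      refine ⟨fun h' => h'.ne, fun hne => ?_⟩
      by_contra hna
      exact hno p q ((G.compl_adj p q).mpr ⟨hne, hna⟩)
    set K : Set V := {v | Gᶜ.Reachable p0 v} with hK
    have hKcne : ∃ t, t ∉ K := by
      by_contra hall
      push_neg at hall
      exact hcon ⟨fun c d => ((hall c).symm.trans (hall d))⟩
    by_cases htwo : ∃ t1 t2, t1 ∉ K ∧ t2 ∉ K ∧ t1 ≠ t2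
    · obtain ⟨t1, t2, ht1, ht2, ht12⟩ := htwo
      apply pc_eq_two_aux G hnc
      apply key_coloring G K {v | v ∉ K} p0 q0 t1 t2
      · exact SimpleGraph.Reachable.refl p0
      · exact hpq.reachable
      · exact ht1
      · exact ht2
      · exact hpq.ne
      · exact ht12
      · intro c hc d hd
        have hcd : c ≠ d := fun h => hd (h ▸ hc)
        have hnadjcd : ¬ Gᶜ.Adj c d := fun hadj => hd (hc.trans hadj.reachable)
        by_contra hna
        exact hnadjcd ((G.compl_adj c d).mpr ⟨hcd, hna⟩)
      · intro v hvK hvnK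
        exact absurd hvK hvnK
    · push_neg at htwo
      obtain ⟨t, htK⟩ := hKcne
      have hiso : ∀ s, ¬ Gᶜ.Adj t s := by
        intro s hadj
        have hsK : s ∈ K := by
          by_contra hs
          exact hadj.ne (htwo t s htK hs)
        exact htK (hsK.trans hadj.symm.reachable)
      refine absurd ⟨?_, t, hiso⟩ h2
      rw [Nat.card_eq_two_iff]
      refine ⟨Gᶜ.connectedComponentMk p0, Gᶜ.connectedComponentMk t, ?_, ?_⟩
      · intro h
        exact htK (SimpleGraph.ConnectedComponent.exact h)
      · apply Set.eq_univ_of_forall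
        intro cc
        induction cc using SimpleGraph.ConnectedComponent.ind with
        | _ v =>
          by_cases hv : v ∈ K
          · exact Or.inl (SimpleGraph.ConnectedComponent.sound hv.symm)
          · right
            rw [htwo v t hv htK]
            rfl
end

section
/- Let G be a connected simple graph with diam(G) = 3, let x be a vertex of G with eccentricity 3, and for i = 1, 2, 3 let N_i denote the set of vertices at distance exactly i from x, with n_i = |N_i|. If n_2 = 1 and n_3 ≥ 2, then pc(Ḡ) = 2. -/
open SimpleGraph

private lemma walk_symm_aux {V : Type*} {G : SimpleGraph V} {k : ℕ} {c : Sym2 V → Fin k}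
    {u v : V} (h : ∃ p : G.Walk u v, p.IsPath ∧ (p.edges.map c).Chain' (· ≠ ·)) :
    ∃ p : G.Walk v u, p.IsPath ∧ (p.edges.map c).Chain' (· ≠ ·) := by
  obtain ⟨p, hp, hc⟩ := h
  refine ⟨p.reverse, hp.reverse, ?_⟩
  rw [SimpleGraph.Walk.edges_reverse, List.map_reverse]
  simp only [List.Chain']
  rw [List.isChain_reverse]
  exact List.IsChain.imp (fun a b hab => Ne.symm hab) hc

/-- Let `G` be connected with diameter 3 and let `x` have eccentricity 3. If the set of
vertices at distance 2 from `x` has exactly one element and the set of vertices at distance 3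
from `x` has at least two elements, then `pc Gᶜ = 2`. -/
theorem pc_compl_diam_three_special {V : Type*} [Fintype V] (G : SimpleGraph V)
    (hG : G.Connected) (hd : G.diam = 3) (x : V)
    (heccle : ∀ y : V, G.dist x y ≤ 3) (hecc : ∃ y : V, G.dist x y = 3)
    (hn2 : {v : V | G.dist x v = 2}.ncard = 1)
    (hn3 : 2 ≤ {v : V | G.dist x v = 3}.ncard) :
    pc Gᶜ = 2 := by
  classical
  -- extract the unique vertex at distance 2
  obtain ⟨w, hw⟩ := Set.ncard_eq_one.mp hn2
  have hdw : G.dist x w = 2 := by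
    have : w ∈ {v : V | G.dist x v = 2} := hw ▸ rfl
    exact this
  have huniq2 : ∀ v : V, G.dist x v = 2 → v = w := by
    intro v hv
    have : v ∈ {v : V | G.dist x v = 2} := hv
    rw [hw] at this; exact this
  -- two distinct vertices at distance 3
  obtain ⟨y, hy, z, hz, hyz⟩ := (Set.one_lt_ncard (Set.toFinite _)).mp hn3
  have hdy : G.dist x y = 3 := hy
  have hdz : G.dist x z = 3 := hz
  -- a vertex at distance 1
  have hu0ex : ∃ u : V, G.dist x u = 1 := by
    obtain ⟨y3, hy3⟩ := hecc
    obtain ⟨p, hp⟩ := hG.exists_walk_length_eq_dist x y3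
    cases p with
    | nil => rw [hy3] at hp; simp at hp
    | cons h q => exact ⟨_, SimpleGraph.dist_eq_one_iff_adj.mpr h⟩
  obtain ⟨u0, hu0⟩ := hu0ex
  have hdxx : G.dist x x = 0 := SimpleGraph.dist_self
  -- vertices with distinct distances are distinct
  have vne : ∀ a b : V, G.dist x a ≠ G.dist x b → a ≠ b := fun a b h hab => h (hab ▸ rfl)
  -- distance 0 means equal to x
  have dzero : ∀ v : V, G.dist x v = 0 → v = x := by
    intro v hv
    exact (hG.dist_eq_zero_iff.mp hv).symm
  -- adjacency facts in the complement
  have adj_x : ∀ v : V, 2 ≤ G.dist x v → Gᶜ.Adj x v := by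
    intro v hv
    rw [compl_adj]
    refine ⟨vne x v (by omega), fun h => ?_⟩
    have h1 : G.dist x v = 1 := SimpleGraph.dist_eq_one_iff_adj.mpr h
    omega
  have adj_13 : ∀ u v : V, G.dist x u = 1 → G.dist x v = 3 → Gᶜ.Adj u v := by
    intro u v hu hv
    rw [compl_adj]
    refine ⟨vne u v (by omega), fun h => ?_⟩
    have h1 : G.dist u v = 1 := SimpleGraph.dist_eq_one_iff_adj.mpr h
    have ht : G.dist x v ≤ G.dist x u + G.dist u v := hG.dist_triangle
    omega
  -- the coloring
  set f : V → V → Fin 2 := fun a b =>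
    if (a = x ∧ G.dist x b = 3 ∧ b ≠ z) ∨ (b = x ∧ G.dist x a = 3 ∧ a ≠ z) ∨
       (a = z ∧ G.dist x b = 1) ∨ (b = z ∧ G.dist x a = 1) then 1 else 0 with hf
  have fsymm : ∀ a b : V, f a b = f b a := by
    intro a b
    simp only [hf]
    apply if_congr _ rfl rfl
    tauto
  set c : Sym2 V → Fin 2 := Sym2.lift ⟨f, fsymm⟩ with hcdef
  have hcm : ∀ a b : V, c s(a, b) = f a b := fun a b => rfl
  -- evaluation lemmas
  have E1 : c s(x, w) = 0 := by
    rw [hcm, hf]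
    beta_reduce
    rw [if_neg]
    rintro (⟨-, h2, -⟩ | ⟨h1, -, -⟩ | ⟨h1, -⟩ | ⟨h1, h2⟩)
    · omega
    · rw [h1] at hdw; omega
    · rw [← h1] at hdz; omega
    · rw [h1] at hdw; omega
  have E2 : ∀ v : V, G.dist x v = 3 → v ≠ z → c s(x, v) = 1 := by
    intro v hv hvz
    rw [hcm, hf]
    beta_reduce
    rw [if_pos (Or.inl ⟨rfl, hv, hvz⟩)]
  have E3 : c s(x, z) = 0 := by
    rw [hcm, hf]
    beta_reduce
    rw [if_neg]
    rintro (⟨-, -, h3⟩ | ⟨h1, -, -⟩ | ⟨h1, -⟩ | ⟨-, h2⟩)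
    · exact h3 rfl
    · rw [h1] at hdz; omega
    · rw [← h1] at hdz; omega
    · omega
  have E4 : ∀ u v : V, G.dist x u = 1 → G.dist x v = 3 → v ≠ z → c s(u, v) = 0 := by
    intro u v hu hv hvz
    rw [hcm, hf]
    beta_reduce
    rw [if_neg]
    rintro (⟨h1, -, -⟩ | ⟨h1, -, -⟩ | ⟨h1, -⟩ | ⟨h1, -⟩)
    · rw [h1] at hu; omega
    · rw [h1] at hv; omega
    · rw [h1] at hu; omega
    · exact hvz h1
  have E5 : ∀ u : V, G.dist x u = 1 → c s(u, z) = 1 := by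
    intro u hu
    rw [hcm, hf]
    beta_reduce
    rw [if_pos (Or.inr (Or.inr (Or.inr ⟨rfl, hu⟩)))]
  -- the key construction, for ordered pairs
  have csym : ∀ a b : V, c s(a, b) = c s(b, a) := fun a b => by rw [Sym2.eq_swap]
  have key : ∀ a b : V, a ≠ b → G.dist x a ≤ G.dist x b →
      ∃ p : Gᶜ.Walk a b, p.IsPath ∧ (p.edges.map c).Chain' (· ≠ ·) := by
    intro a b hab hle
    have hcase : ∀ n : ℕ, n ≤ 3 → n = 0 ∨ n = 1 ∨ n = 2 ∨ n = 3 := by omega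
    rcases hcase _ (heccle a) with ha | ha | ha | ha <;>
      rcases hcase _ (heccle b) with hb | hb | hb | hb
    -- (0,0)
    · exact absurd ((dzero a ha).trans (dzero b hb).symm) hab
    -- (0,1)
    · obtain rfl := dzero a ha
      refine ⟨Walk.cons (adj_x y (by omega)) (Walk.cons (adj_13 b y hb hdy).symm Walk.nil),
        ?_, ?_⟩
      · simp only [Walk.isPath_def, Walk.support_cons, Walk.support_nil, List.nodup_cons,
          List.mem_cons, List.not_mem_nil, List.nodup_nil, not_or]
        exact ⟨⟨vne a y (by omega), hab, not_false⟩, ⟨vne y b (by omega), not_false⟩,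
          not_false, trivial⟩
      · have e1 : c s(a, y) = 1 := E2 y hdy hyz
        have e2 : c s(y, b) = 0 := (csym y b).trans (E4 b y hb hdy hyz)
        simp [List.Chain', Walk.edges_cons, e1, e2]
    -- (0,2)
    · obtain rfl := dzero a ha
      refine ⟨Walk.cons (adj_x b (by omega)) Walk.nil, ?_, ?_⟩
      · simp only [Walk.isPath_def, Walk.support_cons, Walk.support_nil, List.nodup_cons,
          List.mem_cons, List.not_mem_nil, List.nodup_nil, not_or]
        exact ⟨⟨hab, not_false⟩, not_false, trivial⟩
      · simp [List.Chain', Walk.edges_cons]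
    -- (0,3)
    · obtain rfl := dzero a ha
      refine ⟨Walk.cons (adj_x b (by omega)) Walk.nil, ?_, ?_⟩
      · simp only [Walk.isPath_def, Walk.support_cons, Walk.support_nil, List.nodup_cons,
          List.mem_cons, List.not_mem_nil, List.nodup_nil, not_or]
        exact ⟨⟨hab, not_false⟩, not_false, trivial⟩
      · simp [List.Chain', Walk.edges_cons]
    -- (1,0)
    · omega
    -- (1,1)
    · refine ⟨Walk.cons (adj_13 a y ha hdy) (Walk.cons (adj_x y (by omega)).symm
        (Walk.cons (adj_x z (by omega)) (Walk.cons (adj_13 b z hb hdz).symm Walk.nil))),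
        ?_, ?_⟩
      · simp only [Walk.isPath_def, Walk.support_cons, Walk.support_nil, List.nodup_cons,
          List.mem_cons, List.not_mem_nil, List.nodup_nil, not_or]
        exact ⟨⟨vne a y (by omega), vne a x (by omega), vne a z (by omega), hab, not_false⟩,
          ⟨vne y x (by omega), hyz, vne y b (by omega), not_false⟩,
          ⟨vne x z (by omega), vne x b (by omega), not_false⟩,
          ⟨vne z b (by omega), not_false⟩, not_false, trivial⟩
      · have e1 : c s(a, y) = 0 := E4 a y ha hdy hyz
        have e2 : c s(y, x) = 1 := (csym y x).trans (E2 y hdy hyz)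
        have e3 : c s(x, z) = 0 := E3
        have e4 : c s(z, b) = 1 := (csym z b).trans (E5 b hb)
        simp [List.Chain', Walk.edges_cons, e1, e2, e3, e4]
    -- (1,2)
    · obtain rfl := huniq2 b hb
      refine ⟨Walk.cons (adj_13 a y ha hdy) (Walk.cons (adj_x y (by omega)).symm
        (Walk.cons (adj_x b (by omega)) Walk.nil)), ?_, ?_⟩
      · simp only [Walk.isPath_def, Walk.support_cons, Walk.support_nil, List.nodup_cons,
          List.mem_cons, List.not_mem_nil, List.nodup_nil, not_or]
        exact ⟨⟨vne a y (by omega), vne a x (by omega), hab, not_false⟩,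
          ⟨vne y x (by omega), vne y b (by omega), not_false⟩,
          ⟨vne x b (by omega), not_false⟩, not_false, trivial⟩
      · have e1 : c s(a, y) = 0 := E4 a y ha hdy hyz
        have e2 : c s(y, x) = 1 := (csym y x).trans (E2 y hdy hyz)
        have e3 : c s(x, b) = 0 := E1
        simp [List.Chain', Walk.edges_cons, e1, e2, e3]
    -- (1,3)
    · refine ⟨Walk.cons (adj_13 a b ha hb) Walk.nil, ?_, ?_⟩
      · simp only [Walk.isPath_def, Walk.support_cons, Walk.support_nil, List.nodup_cons,
          List.mem_cons, List.not_mem_nil, List.nodup_nil, not_or]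
        exact ⟨⟨hab, not_false⟩, not_false, trivial⟩
      · simp [List.Chain', Walk.edges_cons]
    -- (2,0)
    · omega
    -- (2,1)
    · omega
    -- (2,2)
    · exact absurd ((huniq2 a ha).trans (huniq2 b hb).symm) hab
    -- (2,3)
    · obtain rfl := huniq2 a ha
      by_cases hbz : b = z
      · subst hbz
        refine ⟨Walk.cons (adj_x a (by omega)).symm (Walk.cons (adj_x y (by omega))
          (Walk.cons (adj_13 u0 y hu0 hdy).symm (Walk.cons (adj_13 u0 b hu0 hb) Walk.nil))),
          ?_, ?_⟩
        · simp only [Walk.isPath_def, Walk.support_cons, Walk.support_nil, List.nodup_cons,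
            List.mem_cons, List.not_mem_nil, List.nodup_nil, not_or]
          exact ⟨⟨vne a x (by omega), vne a y (by omega), vne a u0 (by omega), hab, not_false⟩,
            ⟨vne x y (by omega), vne x u0 (by omega), vne x b (by omega), not_false⟩,
            ⟨vne y u0 (by omega), hyz, not_false⟩,
            ⟨vne u0 b (by omega), not_false⟩, not_false, trivial⟩
        · have e1 : c s(a, x) = 0 := (csym a x).trans E1
          have e2 : c s(x, y) = 1 := E2 y hdy hyz
          have e3 : c s(y, u0) = 0 := (csym y u0).trans (E4 u0 y hu0 hdy hyz)
          have e4 : c s(u0, b) = 1 := E5 u0 hu0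
          simp [List.Chain', Walk.edges_cons, e1, e2, e3, e4]
      · refine ⟨Walk.cons (adj_x a (by omega)).symm (Walk.cons (adj_x b (by omega)) Walk.nil),
          ?_, ?_⟩
        · simp only [Walk.isPath_def, Walk.support_cons, Walk.support_nil, List.nodup_cons,
            List.mem_cons, List.not_mem_nil, List.nodup_nil, not_or]
          exact ⟨⟨vne a x (by omega), hab, not_false⟩, ⟨vne x b (by omega), not_false⟩,
            not_false, trivial⟩
        · have e1 : c s(a, x) = 0 := (csym a x).trans E1
          have e2 : c s(x, b) = 1 := E2 b hb hbz
          simp [List.Chain', Walk.edges_cons, e1, e2]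
    -- (3,0)
    · omega
    -- (3,1)
    · omega
    -- (3,2)
    · omega
    -- (3,3)
    · by_cases haz : a = z
      · subst haz
        have hbz : b ≠ a := hab.symm
        refine ⟨Walk.cons (adj_x a (by omega)).symm (Walk.cons (adj_x b (by omega)) Walk.nil),
          ?_, ?_⟩
        · simp only [Walk.isPath_def, Walk.support_cons, Walk.support_nil, List.nodup_cons,
            List.mem_cons, List.not_mem_nil, List.nodup_nil, not_or]
          exact ⟨⟨vne a x (by omega), hab, not_false⟩, ⟨vne x b (by omega), not_false⟩,
            not_false, trivial⟩
        · have e1 : c s(a, x) = 0 := (csym a x).trans E3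
          have e2 : c s(x, b) = 1 := E2 b hb hbz
          simp [List.Chain', Walk.edges_cons, e1, e2]
      · by_cases hbz : b = z
        · subst hbz
          refine ⟨Walk.cons (adj_x a (by omega)).symm (Walk.cons (adj_x b (by omega)) Walk.nil),
            ?_, ?_⟩
          · simp only [Walk.isPath_def, Walk.support_cons, Walk.support_nil, List.nodup_cons,
              List.mem_cons, List.not_mem_nil, List.nodup_nil, not_or]
            exact ⟨⟨vne a x (by omega), hab, not_false⟩, ⟨vne x b (by omega), not_false⟩,
              not_false, trivial⟩
          · have e1 : c s(a, x) = 1 := (csym a x).trans (E2 a ha haz)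
            have e2 : c s(x, b) = 0 := E3
            simp [List.Chain', Walk.edges_cons, e1, e2]
        · refine ⟨Walk.cons (adj_x a (by omega)).symm (Walk.cons (adj_x z (by omega))
            (Walk.cons (adj_13 u0 z hu0 hdz).symm (Walk.cons (adj_13 u0 b hu0 hb) Walk.nil))),
            ?_, ?_⟩
          · simp only [Walk.isPath_def, Walk.support_cons, Walk.support_nil, List.nodup_cons,
              List.mem_cons, List.not_mem_nil, List.nodup_nil, not_or]
            exact ⟨⟨vne a x (by omega), haz, vne a u0 (by omega), hab, not_false⟩,
              ⟨vne x z (by omega), vne x u0 (by omega), vne x b (by omega), not_false⟩,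
              ⟨vne z u0 (by omega), fun h => hbz h.symm, not_false⟩,
              ⟨vne u0 b (by omega), not_false⟩, not_false, trivial⟩
          · have e1 : c s(a, x) = 1 := (csym a x).trans (E2 a ha haz)
            have e2 : c s(x, z) = 0 := E3
            have e3 : c s(z, u0) = 1 := (csym z u0).trans (E5 u0 hu0)
            have e4 : c s(u0, b) = 0 := E4 u0 b hu0 hb hbz
            simp [List.Chain', Walk.edges_cons, e1, e2, e3, e4]
  -- the coloring is a proper-path coloring
  have hmem2 : ∃ cc : Sym2 V → Fin 2, IsProperPathColoring Gᶜ cc := by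
    refine ⟨c, fun a b hab => ?_⟩
    rcases le_total (G.dist x a) (G.dist x b) with h | h
    · exact key a b hab h
    · exact walk_symm_aux (key b a hab.symm h)
  -- conclude
  show sInf {k : ℕ | ∃ cc : Sym2 V → Fin k, IsProperPathColoring Gᶜ cc} = 2
  apply le_antisymm
  · exact Nat.sInf_le hmem2
  · refine le_csInf ⟨2, hmem2⟩ ?_
    rintro k ⟨cc, hcc⟩
    by_contra hk
    push_neg at hk
    interval_cases k
    · exact (cc s(x, x)).elim0
    · have hne1 : x ≠ u0 := vne x u0 (by omega)
      obtain ⟨p, hp, hch⟩ := hcc x u0 hne1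
      have hadj : G.Adj x u0 := SimpleGraph.dist_eq_one_iff_adj.mp hu0
      cases p with
      | nil => exact hne1 rfl
      | cons h q =>
        cases q with
        | nil => exact ((compl_adj G x u0).mp h).2 hadj
        | cons h' q' =>
          simp only [Walk.edges_cons, List.map_cons, List.Chain', List.isChain_cons_cons] at hch
          exact hch.1 (Subsingleton.elim _ _)
end

section
/- Let G be a connected simple graph with diam(G) = 3, let x be a vertex of G with eccentricity 3, and let N_2 denote the set of vertices at distance exactly 2 from x. If |N_2| ≥ 2 and Ḡ is connected, then pc(Ḡ) ≥ n_2', where n_2' is the number of vertices v in N_2 whose degree in Ḡ equals 1. -/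
open SimpleGraph

/-- If a path ends at a vertex whose only neighbor is the start, it is a single edge. -/
lemma edges_eq_of_pendant {V : Type*} {H : SimpleGraph V} {a b : V}
    (q : H.Walk a b) (hq : q.IsPath) (hab : a ≠ b)
    (hnb : H.neighborSet b = {a}) : q.edges = [s(a, b)] := by
  have key : ∀ (r : H.Walk b a), r.IsPath → r.edges = [s(b, a)] := by
    intro r hr
    cases r with
    | nil => exact absurd rfl hab.symm
    | cons h2 q2 =>
      rename_i w2
      have hw2 : w2 ∈ H.neighborSet b := h2
      rw [hnb, Set.mem_singleton_iff] at hw2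
      subst hw2
      have hq2 : q2 = SimpleGraph.Walk.nil := by
        rw [← SimpleGraph.Walk.isPath_iff_eq_nil]
        exact hr.of_cons
      subst hq2
      simp
  have := key q.reverse hq.reverse
  have h2 : q.edges.reverse = [s(b, a)] := by
    rw [← SimpleGraph.Walk.edges_reverse, this]
  have : q.edges = [s(b, a)].reverse := by
    rw [← h2, List.reverse_reverse]
  rw [this]
  simp [Sym2.eq_swap]

/-- Let `G` be connected with diameter 3 and let `x` have eccentricity 3. If at least two
vertices are at distance 2 from `x` and `Gᶜ` is connected, then `pc Gᶜ` is at least the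
number of vertices at distance 2 from `x` whose degree in `Gᶜ` equals 1. -/
theorem pc_compl_ge_pendant_count {V : Type*} [Fintype V] (G : SimpleGraph V)
    (hG : G.Connected) (hd : G.diam = 3) (x : V)
    (heccle : ∀ y : V, G.dist x y ≤ 3) (hecc : ∃ y : V, G.dist x y = 3)
    (hn2 : 2 ≤ {v : V | G.dist x v = 2}.ncard)
    (hconn : Gᶜ.Connected) :
    {v : V | G.dist x v = 2 ∧ (Gᶜ.neighborSet v).ncard = 1}.ncard ≤ pc Gᶜ := by
  classical
  set S : Set V := {v : V | G.dist x v = 2 ∧ (Gᶜ.neighborSet v).ncard = 1} with hS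
  -- every v ∈ S has Gᶜ.neighborSet v = {x}
  have hnb : ∀ v ∈ S, Gᶜ.neighborSet v = {x} ∧ v ≠ x := by
    intro v hv
    obtain ⟨hd2, hdeg⟩ := hv
    have hvx : v ≠ x := by
      intro h; subst h; simp [SimpleGraph.dist_self] at hd2
    have hnadj : ¬ G.Adj x v := by
      intro h
      rw [← SimpleGraph.dist_eq_one_iff_adj] at h
      omega
    have hadj : Gᶜ.Adj v x := by
      rw [SimpleGraph.compl_adj]
      exact ⟨hvx, fun h => hnadj h.symm⟩
    obtain ⟨a, ha⟩ := Set.ncard_eq_one.mp hdeg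
    have hxmem : x ∈ Gᶜ.neighborSet v := hadj
    rw [ha, Set.mem_singleton_iff] at hxmem
    subst hxmem
    exact ⟨ha, hvx⟩
  -- the set of admissible color counts is nonempty
  have hne : ({k : ℕ | ∃ c : Sym2 V → Fin k, IsProperPathColoring Gᶜ c}).Nonempty := by
    refine ⟨Fintype.card (Sym2 V), (Fintype.equivFin (Sym2 V) : Sym2 V → Fin _), ?_⟩
    intro u v huv
    obtain ⟨p⟩ := hconn u v
    refine ⟨p.bypass, p.bypass_isPath, ?_⟩
    apply List.Pairwise.isChain
    refine List.Pairwise.map _ (fun a b h => ?_) p.bypass_isPath.edges_nodup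
    exact fun he => h ((Fintype.equivFin (Sym2 V)).injective he)
  refine le_csInf hne ?_
  rintro k ⟨c, hc⟩
  -- the map v ↦ c s(x, v) is injective on S
  have hinj : Set.InjOn (fun v => c s(x, v)) S := by
    intro u hu v hv hcuv
    by_contra hne'
    obtain ⟨p, hp, hchain⟩ := hc u v hne'
    obtain ⟨hnbu, hux⟩ := hnb u hu
    obtain ⟨hnbv, hvx⟩ := hnb v hv
    cases p with
    | nil => exact hne' rfl
    | cons h q =>
      rename_i w
      have hw : w ∈ Gᶜ.neighborSet u := h
      rw [hnbu, Set.mem_singleton_iff] at hw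
      subst w
      have hq : q.edges = [s(x, v)] :=
        edges_eq_of_pendant q hp.of_cons hvx.symm hnbv
      rw [SimpleGraph.Walk.edges_cons, hq] at hchain
      simp only [List.Chain', List.map_cons, List.map_nil, List.isChain_cons_cons, List.isChain_singleton,
        and_true] at hchain
      apply hchain
      rw [show s(u, x) = s(x, u) from Sym2.eq_swap]
      exact hcuv
  calc S.ncard = ((fun v => c s(x, v)) '' S).ncard := (Set.ncard_image_of_injOn hinj).symm
    _ ≤ (Set.univ : Set (Fin k)).ncard := Set.ncard_le_ncard (Set.subset_univ _) Set.finite_univ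
    _ = k := by simp [Set.ncard_univ]
end

section
/- If G is a connected triangle-free simple graph with diam(G) = 3, then pc(Ḡ) = 2. -/
open SimpleGraph


lemma alt_chain {α : Type*} [DecidableEq α] {l m : List α} (hn : l.Nodup) (hm : m <:+: l) :
    (m.map (fun e => (⟨l.idxOf e % 2, Nat.mod_lt _ two_pos⟩ : Fin 2))).Chain' (· ≠ ·) := by
  obtain ⟨s, t, rfl⟩ := hm
  unfold List.Chain'
  rw [List.isChain_map, List.isChain_iff_getElem]
  intro i hi
  have hidx : ∀ (j) (hj : j < m.length), (s ++ m ++ t).idxOf (m.get ⟨j, hj⟩) = s.length + j := by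
    intro j hj
    have h1 : s.length + j < (s ++ m ++ t).length := by
      simp only [List.length_append]; omega
    have h2 : (s ++ m ++ t)[s.length + j]'h1 = m[j]'hj := by
      rw [List.getElem_append_left (by simp only [List.length_append]; omega),
        List.getElem_append_right (by omega)]
      congr 1
      omega
    have := List.Nodup.idxOf_getElem hn (s.length + j) h1
    rw [h2] at this
    simpa using this
  have e1 := hidx i (by omega)
  have e2 := hidx (i + 1) (by omega)
  intro hcon
  simp only [List.get_eq_getElem] at e1 e2
  rw [Fin.mk.injEq, e1, e2] at hcon
  omega

lemma exists_subwalk {V : Type*} [DecidableEq V] {H : SimpleGraph V} {u v : V} {p : H.Walk u v}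
    (hp : p.IsPath) {x y : V} (hx : x ∈ p.support) (hy : y ∈ p.support) :
    ∃ q : H.Walk x y, q.IsPath ∧ (q.edges <:+: p.edges ∨ q.edges.reverse <:+: p.edges) := by
  by_cases h : y ∈ (p.dropUntil x hx).support
  · refine ⟨(p.dropUntil x hx).takeUntil y h, (hp.dropUntil hx).takeUntil h, Or.inl ?_⟩
    refine ⟨(p.takeUntil x hx).edges, ((p.dropUntil x hx).dropUntil y h).edges, ?_⟩
    rw [List.append_assoc, ← Walk.edges_append, Walk.take_spec, ← Walk.edges_append,
      Walk.take_spec]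
  · have hy' : y ∈ (p.takeUntil x hx).support := by
      have : y ∈ (p.takeUntil x hx).support ∨ y ∈ (p.dropUntil x hx).support := by
        rw [← Walk.mem_support_append_iff, Walk.take_spec]; exact hy
      tauto
    refine ⟨((p.takeUntil x hx).dropUntil y hy').reverse,
      ((hp.takeUntil hx).dropUntil hy').reverse, Or.inr ?_⟩
    rw [Walk.edges_reverse, List.reverse_reverse]
    refine ⟨((p.takeUntil x hx).takeUntil y hy').edges, (p.dropUntil x hx).edges, ?_⟩
    rw [List.append_assoc, ← Walk.edges_append, ← Walk.edges_append, Walk.append_assoc,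
      Walk.take_spec, Walk.take_spec]


lemma boundary' {V : Type*} {H : SimpleGraph V} (P : V → Prop) :
    ∀ {a b : V} (_ : H.Walk a b), ¬ P a → P b → ∃ x y, ¬ P x ∧ P y ∧ H.Adj x y := by
  intro a b w
  induction w with
  | nil => exact fun h1 h2 => absurd h2 h1
  | @cons u c d h q ih =>
    intro h1 h2
    by_cases hc : P c
    · exact ⟨u, c, h1, hc, h⟩
    · exact ih hc h2

lemma exists_ham_path {V : Type*} [Fintype V] [Nonempty V] (H : SimpleGraph V)
    (hc : H.Connected)
    (hα : ∀ a b c : V, a ≠ b → a ≠ c → b ≠ c → H.Adj a b ∨ H.Adj a c ∨ H.Adj b c) :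
    ∃ (u v : V) (p : H.Walk u v), p.IsPath ∧ ∀ x, x ∈ p.support := by
  classical
  have hne : {n : ℕ | ∃ (u v : V) (p : H.Walk u v), p.IsPath ∧ p.length = n}.Nonempty :=
    ⟨0, Classical.arbitrary V, Classical.arbitrary V, Walk.nil, by simp⟩
  have hbdd : BddAbove {n : ℕ | ∃ (u v : V) (p : H.Walk u v), p.IsPath ∧ p.length = n} :=
    ⟨Fintype.card V, by rintro n ⟨u, v, p, hp, rfl⟩; exact hp.length_lt.le⟩
  obtain ⟨u, v, p, hp, hlen⟩ := Nat.sSup_mem hne hbdd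
  have hmax : ∀ (a b : V) (q : H.Walk a b), q.IsPath → q.length ≤ p.length := by
    intro a b q hq
    rw [hlen]
    exact le_csSup hbdd ⟨a, b, q, hq, rfl⟩
  refine ⟨u, v, p, hp, ?_⟩
  by_contra hspan
  push_neg at hspan
  obtain ⟨x, hx⟩ := hspan
  obtain ⟨w, s, hw, hs, hws⟩ :=
    boundary' (· ∈ p.support) ((hc.preconnected x u).some) hx p.start_mem_support
  have hwu : ¬ H.Adj w u := by
    intro h
    have h2 : (Walk.cons h p).IsPath := hp.cons hw
    have := hmax _ _ _ h2
    simp at this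
  have hwv : ¬ H.Adj w v := by
    intro h
    have h2 : (Walk.cons h p.reverse).IsPath := hp.reverse.cons (by simpa using hw)
    have := hmax _ _ _ h2
    simp at this
  have hwune : w ≠ u := fun h => hw (h ▸ p.start_mem_support)
  have hwvne : w ≠ v := fun h => hw (h ▸ p.end_mem_support)
  have huv : u ≠ v := by
    rintro rfl
    rw [Walk.isPath_iff_eq_nil] at hp
    subst hp
    simp only [Walk.support_nil, List.mem_singleton] at hs
    exact hwu (hs ▸ hws)
  have hadj : H.Adj u v := by
    rcases hα w u v hwune hwvne huv with h | h | h
    · exact absurd h hwu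
    · exact absurd h hwv
    · exact h
  have hsu : s ≠ u := fun h => hwu (h ▸ hws)
  have hsv : s ≠ v := fun h => hwv (h ▸ hws)
  have hedge : s(v, u) ∉ p.edges := by
    intro he
    cases p with
    | nil => simp at he
    | @cons _ c _ h q =>
      rw [Walk.cons_isPath_iff] at hp
      rw [Walk.edges_cons] at he
      rcases List.mem_cons.mp he with he | he
      · rw [Sym2.eq_iff] at he
        rcases he with ⟨h1, h2⟩ | ⟨h1, h2⟩
        · exact huv h1.symm
        · have hq := hp.1
          subst h1
          rw [Walk.isPath_iff_eq_nil] at hq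
          subst hq
          simp only [Walk.support_cons, Walk.support_nil, List.mem_cons,
            List.mem_singleton] at hs
          rcases hs with hs | hs | hs
          · exact hsu hs
          · exact hsv hs
          · simp at hs
      · exact hp.2 (Walk.snd_mem_support_of_mem_edges q he)
  have hC : (Walk.cons hadj.symm p).IsCycle :=
    (Walk.cons_isCycle_iff p hadj.symm).mpr ⟨hp, hedge⟩
  have hsC : s ∈ (Walk.cons hadj.symm p).support := by
    rw [Walk.support_cons]; exact List.mem_cons_of_mem _ hs
  have hC' : ((Walk.cons hadj.symm p).rotate _ hsC).IsCycle := hC.rotate hsC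
  have hwC' : w ∉ ((Walk.cons hadj.symm p).rotate _ hsC).support := by
    intro hmem
    rw [Walk.rotate, Walk.mem_support_append_iff] at hmem
    have hsub : w ∈ (Walk.cons hadj.symm p).support := by
      rcases hmem with h | h
      · exact Walk.support_dropUntil_subset _ _ h
      · exact Walk.support_takeUntil_subset _ _ h
    rw [Walk.support_cons, List.mem_cons] at hsub
    rcases hsub with h | h
    · exact hwvne h
    · exact hw h
  have hlenC' : ((Walk.cons hadj.symm p).rotate _ hsC).length = p.length + 1 := by
    rw [Walk.rotate, Walk.length_append, Nat.add_comm, ← Walk.length_append, Walk.take_spec,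
      Walk.length_cons]
  obtain ⟨b, hb, q, hq⟩ : ∃ (b : V) (hb : H.Adj s b) (q : H.Walk b s),
      (Walk.cons hadj.symm p).rotate _ hsC = Walk.cons hb q := by
    cases hcc : (Walk.cons hadj.symm p).rotate _ hsC with
    | nil => rw [hcc] at hC'; exact absurd rfl hC'.ne_nil
    | cons hb q => exact ⟨_, hb, q, rfl⟩
  rw [hq] at hC' hwC' hlenC'
  have hqpath : q.IsPath := ((Walk.cons_isCycle_iff q hb).mp hC').1
  have hwq : w ∉ q.reverse.support := by
    rw [Walk.support_reverse, List.mem_reverse]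
    intro h
    exact hwC' (by rw [Walk.support_cons]; exact List.mem_cons_of_mem _ h)
  have hQ : (Walk.cons hws q.reverse).IsPath := hqpath.reverse.cons hwq
  have := hmax _ _ _ hQ
  rw [Walk.length_cons, Walk.length_reverse] at this
  rw [Walk.length_cons] at hlenC'
  omega

/-- If `G` is connected, triangle-free and has diameter 3, then `pc Gᶜ = 2`. -/
theorem pc_compl_triangle_free_diam_three {V : Type*} [Fintype V] (G : SimpleGraph V)
    (hG : G.Connected) (htf : G.CliqueFree 3) (hd : G.diam = 3) :
    pc Gᶜ = 2 := by
  classical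
  have h30 : G.diam ≠ 0 := by rw [hd]; norm_num
  have hnt : Nontrivial V := G.nontrivial_of_diam_ne_zero h30
  have hnonempty : Nonempty V := inferInstance
  obtain ⟨a, b, hab⟩ := G.exists_dist_eq_diam
  rw [hd] at hab
  have hαc : ∀ x y z : V, x ≠ y → x ≠ z → y ≠ z →
      Gᶜ.Adj x y ∨ Gᶜ.Adj x z ∨ Gᶜ.Adj y z := by
    intro x y z hxy hxz hyz
    by_contra hcon
    push_neg at hcon
    obtain ⟨h1, h2, h3⟩ := hcon
    rw [compl_adj, not_and, not_not] at h1 h2 h3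
    exact htf {x, y, z} (is3Clique_triple_iff.mpr ⟨h1 hxy, h2 hxz, h3 hyz⟩)
  have hconn : Gᶜ.Connected := by
    rw [connected_iff]
    refine ⟨fun x y => ?_, hnonempty⟩
    by_cases hxy : x = y
    · exact hxy ▸ Reachable.refl x
    by_cases hadj : G.Adj x y
    swap
    · exact Adj.reachable (by rw [compl_adj]; exact ⟨hxy, hadj⟩)
    by_cases hB : ∃ t, t ≠ x ∧ t ≠ y ∧ ¬G.Adj x t ∧ ¬G.Adj y t
    · obtain ⟨t, htx, hty, htx', hty'⟩ := hB
      exact Reachable.trans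
        (Adj.reachable (by rw [compl_adj]; exact ⟨Ne.symm htx, fun h => htx' h⟩))
        (Adj.reachable (by rw [compl_adj]; exact ⟨hty, fun h => hty' h.symm⟩))
    push_neg at hB
    by_cases hB1 : ∃ a' b', G.Adj x a' ∧ a' ≠ y ∧ G.Adj y b' ∧ b' ≠ x ∧ ¬G.Adj a' b'
    · obtain ⟨a', b', ha1, ha2, hb1, hb2, hab'⟩ := hB1
      have e1 : Gᶜ.Adj x b' := by
        rw [compl_adj]
        refine ⟨Ne.symm hb2, fun h => ?_⟩
        exact htf {x, y, b'} (is3Clique_triple_iff.mpr ⟨hadj, h, hb1⟩)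
      have e2 : Gᶜ.Adj b' a' := by
        rw [compl_adj]
        refine ⟨fun h => htf {x, y, a'} (is3Clique_triple_iff.mpr ⟨hadj, ha1, h ▸ hb1⟩),
          fun h => hab' h.symm⟩
      have e3 : Gᶜ.Adj a' y := by
        rw [compl_adj]
        refine ⟨ha2, fun h => ?_⟩
        exact htf {x, y, a'} (is3Clique_triple_iff.mpr ⟨hadj, ha1, h.symm⟩)
      exact (e1.reachable.trans e2.reachable).trans e3.reachable
    push_neg at hB1
    exfalso
    have hclass : ∀ s : V, s = x ∨ G.Adj x s ∨ G.Adj y s := by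
      intro s
      by_cases h1 : s = x
      · exact Or.inl h1
      by_cases h2 : s = y
      · exact Or.inr (Or.inl (h2 ▸ hadj))
      by_cases h3 : G.Adj x s
      · exact Or.inr (Or.inl h3)
      · exact Or.inr (Or.inr (hB s h1 h2 h3))
    have hdle : ∀ {p q r : V}, G.Adj p q → G.Adj q r → G.dist p r ≤ 2 := by
      intro p q r h h'
      simpa using G.dist_le (Walk.cons h (Walk.cons h' Walk.nil))
    have hd1 : ∀ {p q : V}, G.Adj p q → G.dist p q ≤ 2 := by
      intro p q h
      exact le_trans (by simpa using G.dist_le (Walk.cons h Walk.nil)) one_le_two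
    have claim : ∀ s t : V, G.dist s t ≤ 2 := by
      intro s t
      rcases hclass s with rfl | hs | hs <;> rcases hclass t with rfl | ht | ht
      · rw [dist_self]; omega
      · exact hd1 ht
      · exact hdle hadj ht
      · exact hd1 hs.symm
      · exact hdle hs.symm ht
      · by_cases h1 : s = y
        · exact hd1 (h1 ▸ ht)
        by_cases h2 : t = x
        · exact h2 ▸ hd1 hs.symm
        · exact hd1 (hB1 s t hs h1 ht h2)
      · exact hdle hs.symm hadj.symm
      · by_cases h1 : t = y
        · exact hd1 (h1 ▸ hs).symm
        by_cases h2 : s = x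
        · exact h2 ▸ hd1 ht
        · exact hd1 (hB1 t s ht h1 hs h2).symm
      · exact hdle hs.symm ht
    have := claim a b
    omega
  obtain ⟨u0, v0, P, hP, hspanP⟩ := exists_ham_path Gᶜ hconn hαc
  have hnd : P.edges.Nodup := hP.isTrail.edges_nodup
  have h2mem : ∃ c : Sym2 V → Fin 2, IsProperPathColoring Gᶜ c := by
    refine ⟨fun e => ⟨P.edges.idxOf e % 2, Nat.mod_lt _ two_pos⟩, ?_⟩
    intro s t hst
    obtain ⟨q, hq, hinf | hinf⟩ := exists_subwalk hP (hspanP s) (hspanP t)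
    · exact ⟨q, hq, alt_chain hnd hinf⟩
    · refine ⟨q, hq, ?_⟩
      have h1 := alt_chain hnd hinf
      rw [List.map_reverse] at h1
      exact (List.isChain_reverse.mp h1).imp fun a b h => h.symm
  unfold pc
  apply le_antisymm
  · exact Nat.sInf_le h2mem
  · refine le_csInf ⟨2, h2mem⟩ ?_
    rintro k ⟨c', hc'⟩
    by_contra hk
    push_neg at hk
    interval_cases k
    · exact (c' s(a, a)).elim0
    · have hab3 : a ≠ b := by
        intro h
        rw [h, SimpleGraph.dist_self] at hab
        exact absurd hab (by decide)
      obtain ⟨W⟩ := hG.preconnected a b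
      have hz : ∃ z, G.Adj a z := by
        cases W with
        | nil => exact absurd rfl hab3
        | cons h q => exact ⟨_, h⟩
      obtain ⟨z, haz⟩ := hz
      obtain ⟨p', hp', hchain⟩ := hc' a z haz.ne
      cases p' with
      | nil => exact haz.ne rfl
      | @cons _ d _ h q =>
        cases q with
        | nil =>
          rw [compl_adj] at h
          exact h.2 haz
        | cons h2 q2 =>
          rw [Walk.edges_cons, Walk.edges_cons, List.map_cons, List.map_cons] at hchain
          exact (List.isChain_cons_cons.mp hchain).1 (Subsingleton.elim _ _)
end

section
/- If G is a tree with diam(G) ≥ 3, then pc(Ḡ) = 2. -/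
open SimpleGraph
open Fin.NatCast

section
variable {V : Type*} {G : SimpleGraph V}

lemma tree_dist_ne [DecidableEq V] (hconn : G.Connected) (hac : G.IsAcyclic) (r : V) {u v : V}
    (h : G.Adj u v) : G.dist r u ≠ G.dist r v := by
  intro heq
  obtain ⟨p, hp, hpl⟩ := hconn.exists_path_of_dist r u
  obtain ⟨q, hq, hql⟩ := hconn.exists_path_of_dist r v
  by_cases hv : v ∈ p.support
  · have ht : (p.takeUntil v hv).IsPath := hp.takeUntil hv
    have huniq := isAcyclic_iff_path_unique.mp hac ⟨p.takeUntil v hv, ht⟩ ⟨q, hq⟩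
    have hlen : (p.takeUntil v hv).length = q.length := by
      rw [congrArg (fun P : G.Path r v => (P : G.Walk r v).length) huniq]
    have hspec := congrArg Walk.length (p.take_spec hv)
    rw [Walk.length_append] at hspec
    have hdrop : (p.dropUntil v hv).length = 0 := by omega
    exact h.ne' (Walk.eq_of_length_eq_zero hdrop)
  · have hw : (Walk.cons h.symm p.reverse).IsPath := by
      rw [Walk.cons_isPath_iff]
      exact ⟨hp.reverse, by simpa using hv⟩
    have huniq := isAcyclic_iff_path_unique.mp hac
      ⟨Walk.cons h.symm p.reverse, hw⟩ ⟨q.reverse, hq.reverse⟩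
    have hlen : (Walk.cons h.symm p.reverse).length = q.reverse.length := by
      rw [congrArg (fun P : G.Path v r => (P : G.Walk v r).length) huniq]
    simp [Walk.length_cons, Walk.length_reverse] at hlen
    omega

lemma tree_coloring (hconn : G.Connected) (hac : G.IsAcyclic) (r : V) {u v : V}
    (h : G.Adj u v) : ((G.dist r u : Fin 2)) ≠ (G.dist r v : Fin 2) := by
  classical
  have hne := tree_dist_ne hconn hac r h
  have h1 : G.dist r v ≤ G.dist r u + 1 := by
    have := hconn.dist_triangle (u := r) (v := u) (w := v)
    rwa [(dist_eq_one_iff_adj).mpr h] at this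
  have h2 : G.dist r u ≤ G.dist r v + 1 := by
    have := hconn.dist_triangle (u := r) (v := v) (w := u)
    rwa [(dist_eq_one_iff_adj).mpr h.symm] at this
  intro hcast
  have := congrArg Fin.val hcast
  simp [Fin.val_natCast] at this
  omega

lemma fin2_trans {x y z : Fin 2} (h1 : x ≠ y) (h2 : y ≠ z) : x = z := by
  revert h1 h2; revert x y z; decide

end


/-- If `G` is a tree with diameter at least 3, then `pc Gᶜ = 2`. -/
theorem pc_compl_tree_diam_ge_three {V : Type*} [Fintype V] (G : SimpleGraph V)
    (hconn : G.Connected) (hac : G.IsAcyclic) (hd : 3 ≤ G.diam) :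
    pc Gᶜ = 2 := by
  classical
  have hdne : G.diam ≠ 0 := by omega
  have hnt : Nontrivial V := G.nontrivial_of_diam_ne_zero hdne
  obtain ⟨u0, v0, hd3⟩ := G.exists_dist_eq_diam
  obtain ⟨p, hp, hpl⟩ := hconn.exists_path_of_dist u0 v0
  have hlen3 : 3 ≤ p.length := by rw [hpl, hd3]; exact hd
  rcases p with _ | ⟨h1, _ | ⟨h2, _ | ⟨h3, q⟩⟩⟩
  · simp at hlen3
  · simp at hlen3
  · simp at hlen3
  rename_i w1 w2 w3
  simp only [Walk.cons_isPath_iff, Walk.support_cons, List.mem_cons] at hp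
  have hne01 : u0 ≠ w1 := h1.ne
  have hne02 : u0 ≠ w2 := by rintro rfl; exact hp.2 (Or.inr (Or.inl rfl))
  have hne13 : w1 ≠ w3 := by rintro rfl; exact hp.1.2 (Or.inr q.start_mem_support)
  set C : V → Fin 2 := fun v => (G.dist u0 v : Fin 2) with hCdef
  have hC : ∀ u v : V, G.Adj u v → C u ≠ C v := fun u v h =>
    tree_coloring hconn hac u0 h
  have hC02 : C u0 = C w2 := fin2_trans (hC _ _ h1) (hC _ _ h2)
  have hC13 : C w1 = C w3 := fin2_trans (hC _ _ h2) (hC _ _ h3)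
  have hex : ∀ x : V, ∃ y : V, y ≠ x ∧ C y = C x := by
    intro x
    by_cases hx : C x = C u0
    · by_cases hxu : x = u0
      · exact ⟨w2, by rw [hxu]; exact hne02.symm, by rw [hx, hC02]⟩
      · exact ⟨u0, fun h => hxu h.symm, hx.symm⟩
    · have hxa : C x = C w1 := fin2_trans hx (hC _ _ h1)
      by_cases hxw : x = w1
      · exact ⟨w3, by rw [hxw]; exact hne13.symm, by rw [hxa, hC13]⟩
      · exact ⟨w1, fun h => hxw h.symm, hxa.symm⟩
  have hcompl : ∀ u v : V, u ≠ v → ¬ G.Adj u v → Gᶜ.Adj u v := by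
    intro u v h1 h2; exact ⟨h1, h2⟩
  have hsame : ∀ u v : V, u ≠ v → C u = C v → Gᶜ.Adj u v := by
    intro u v h1 h2
    exact hcompl u v h1 (fun hadj => hC u v hadj h2)
  set c : Sym2 V → Fin 2 :=
    Sym2.lift ⟨fun u v => if C u = C v then 0 else 1,
      fun a b => by by_cases h : C a = C b <;> simp [h, eq_comm] <;> tauto⟩ with hcdef
  have hcval : ∀ u v : V, c s(u, v) = if C u = C v then 0 else 1 := fun u v => rfl
  have hmem : 2 ∈ {k : ℕ | ∃ c : Sym2 V → Fin k, IsProperPathColoring Gᶜ c} := by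
    refine ⟨c, ?_⟩
    intro x y hxy
    by_cases hcc : C x = C y
    · refine ⟨Walk.cons (hsame x y hxy hcc) Walk.nil, ?_, ?_⟩
      · simp [Walk.cons_isPath_iff, hxy]
      · simp [List.Chain']
    · by_cases hadj : G.Adj x y
      · by_cases hA : ∃ a, a ≠ x ∧ C a = C x ∧ ¬ G.Adj a y
        · obtain ⟨a, hax, hca, hnay⟩ := hA
          have hay : a ≠ y := by rintro rfl; exact hcc hca.symm
          have hxa : x ≠ a := fun h => hax h.symm
          refine ⟨Walk.cons (hsame x a hxa hca.symm)
            (Walk.cons (hcompl a y hay hnay) Walk.nil), ?_, ?_⟩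
          · simp [Walk.cons_isPath_iff, hxy, hxa, hay]
          · simp only [Walk.edges_cons, Walk.edges_nil, List.map_cons, List.map_nil,
              hcval, if_pos hca.symm,
              if_neg (show ¬ C a = C y from fun h => hcc (hca.symm.trans h))]
            simp [List.Chain', List.isChain_cons_cons]
        · by_cases hB : ∃ b, b ≠ y ∧ C b = C y ∧ ¬ G.Adj x b
          · obtain ⟨b, hby, hcb, hnxb⟩ := hB
            have hbx : b ≠ x := by rintro rfl; exact hcc hcb
            have hxb : x ≠ b := fun h => hbx h.symm
            refine ⟨Walk.cons (hcompl x b hxb hnxb)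
              (Walk.cons (hsame b y hby hcb) Walk.nil), ?_, ?_⟩
            · simp [Walk.cons_isPath_iff, hxy, hxb, hby]
            · simp only [Walk.edges_cons, Walk.edges_nil, List.map_cons, List.map_nil,
                hcval, if_pos hcb,
                if_neg (show ¬ C x = C b from fun h => hcc (h.trans hcb))]
              simp [List.Chain', List.isChain_cons_cons]
          · push_neg at hA hB
            obtain ⟨a, hax, hca⟩ := hex x
            obtain ⟨b, hby, hcb⟩ := hex y
            have hGay : G.Adj a y := hA a hax hca
            have hGxb : G.Adj x b := hB b hby hcb
            have hcab : C a ≠ C b := by rw [hca, hcb]; exact hcc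
            have hab : a ≠ b := fun h => hcab (congrArg C h)
            have hay : a ≠ y := by rintro rfl; exact hcc hca.symm
            have hbx : b ≠ x := by rintro rfl; exact hcc hcb
            have hxa : x ≠ a := fun h => hax h.symm
            have hxb : x ≠ b := fun h => hbx h.symm
            have hnab : ¬ G.Adj a b := by
              intro habadj
              have hP2 : (Walk.cons habadj (Walk.cons hGxb.symm
                  (Walk.cons hadj Walk.nil))).IsPath := by
                simp [Walk.cons_isPath_iff, hab, hay, hax, hxy, hby, hbx]
              have hP1 : (Walk.cons hGay Walk.nil).IsPath := by
                simp [Walk.cons_isPath_iff, hay]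
              have huniq := isAcyclic_iff_path_unique.mp hac
                ⟨Walk.cons hGay Walk.nil, hP1⟩
                ⟨Walk.cons habadj (Walk.cons hGxb.symm (Walk.cons hadj Walk.nil)), hP2⟩
              have hll := congrArg (fun P : G.Path a y => (P : G.Walk a y).length) huniq
              simp at hll
            refine ⟨Walk.cons (hsame x a hxa hca.symm)
              (Walk.cons (hcompl a b hab hnab)
              (Walk.cons (hsame b y hby hcb) Walk.nil)), ?_, ?_⟩
            · simp [Walk.cons_isPath_iff, hab, hay, hxy, hby, hxa, hxb]
            · simp only [Walk.edges_cons, Walk.edges_nil, List.map_cons, List.map_nil,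
                hcval, if_pos hca.symm, if_pos hcb, if_neg hcab]
              simp [List.Chain', List.isChain_cons_cons]
      · refine ⟨Walk.cons (hcompl x y hxy hadj) Walk.nil, ?_, ?_⟩
        · simp [Walk.cons_isPath_iff, hxy]
        · simp [List.Chain']
  refine le_antisymm (Nat.sInf_le hmem) ?_
  refine le_csInf ⟨2, hmem⟩ ?_
  rintro k ⟨ck, hck⟩
  by_contra hk
  push_neg at hk
  interval_cases k
  · exact (ck s(u0, u0)).elim0
  · obtain ⟨pw, hpw, hch⟩ := hck u0 w1 hne01
    rcases pw with _ | ⟨e1, _ | ⟨e2, q2⟩⟩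
    · exact hne01 rfl
    · exact e1.2 h1
    · simp only [Walk.edges_cons, List.map_cons, List.Chain', List.isChain_cons_cons] at hch
      exact hch.1 (Subsingleton.elim _ _)
end

section
/- Let G be a connected triangle-free simple graph with diam(G) = 2. If the complement Ḡ is connected, then pc(Ḡ) = 2. -/
open SimpleGraph

section Aux

variable {V : Type*}

/-- The list of consecutive-pair edges of a list of vertices. -/
def zipE (l : List V) : List (Sym2 V) := l.zipWith (fun a b => s(a, b)) l.tail

lemma zipE_length (l : List V) : (zipE l).length = l.length - 1 := by
  simp [zipE]

lemma zipE_get (l : List V) (i : ℕ) (h : i + 1 < l.length) :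
    (zipE l)[i]'(by rw [zipE_length]; omega) = s(l[i]'(by omega), l[i+1]'h) := by
  simp [zipE, List.getElem_zipWith, List.getElem_tail]

lemma zipE_nodup {l : List V} (h : l.Nodup) : (zipE l).Nodup := by
  rw [List.nodup_iff_injective_get] at h ⊢
  rintro ⟨i, hi⟩ ⟨j, hj⟩ hij
  rw [zipE_length] at hi hj
  simp only [List.get_eq_getElem] at hij
  rw [zipE_get l i (by omega), zipE_get l j (by omega)] at hij
  rw [Sym2.eq_iff] at hij
  have hinj : ∀ (a b : ℕ) (ha : a < l.length) (hb : b < l.length),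
      l[a] = l[b] → a = b := by
    intro a b ha hb hab
    have := h (a₁ := ⟨a, ha⟩) (a₂ := ⟨b, hb⟩) (by simpa using hab)
    simpa using this
  rcases hij with ⟨h1, h2⟩ | ⟨h1, h2⟩
  · have := hinj i j (by omega) (by omega) h1
    simp [this]
  · have e1 := hinj i (j+1) (by omega) (by omega) h1
    have e2 := hinj (i+1) j (by omega) (by omega) h2
    omega

lemma walk_of_chain {H : SimpleGraph V} :
    ∀ (t : List V) (a b : V), (a :: t).Chain' H.Adj →
      (a :: t).getLast (List.cons_ne_nil a t) = b →
      ∃ p : H.Walk a b, p.support = a :: t ∧ p.edges = zipE (a :: t) := by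
  intro t
  induction t with
  | nil =>
    intro a b _ hb
    simp only [List.getLast_singleton] at hb
    subst hb
    exact ⟨SimpleGraph.Walk.nil, by simp, by simp [zipE]⟩
  | cons x t ih =>
    intro a b hc hb
    rw [List.Chain', List.isChain_cons_cons] at hc
    have hb' : (x :: t).getLast (List.cons_ne_nil x t) = b := by
      rw [← hb, List.getLast_cons (List.cons_ne_nil x t)]
    obtain ⟨p, hs, he⟩ := ih x b hc.2 hb'
    exact ⟨SimpleGraph.Walk.cons hc.1 p, by simp [hs], by simp [he, zipE]⟩

lemma exists_boundary {H : SimpleGraph V} (S : Set V) :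
    ∀ {a b : V}, H.Walk a b → a ∉ S → b ∈ S →
      ∃ x y, x ∉ S ∧ y ∈ S ∧ H.Adj x y := by
  intro a b w
  induction w with
  | nil => intro ha hb; exact absurd hb ha
  | @cons u z v h q ih =>
    intro ha hb
    by_cases hz : z ∈ S
    · exact ⟨u, z, ha, hz, h⟩
    · exact ih hz hb

lemma exists_ham_list [Fintype V] (H : SimpleGraph V) (hc : H.Connected)
    (hα : ∀ x y z : V, x ≠ y → x ≠ z → y ≠ z → ¬H.Adj x y → ¬H.Adj x z → H.Adj y z) :
    ∃ l : List V, l.Nodup ∧ l.Chain' H.Adj ∧ ∀ v : V, v ∈ l := by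
  classical
  obtain ⟨v0⟩ := hc.nonempty
  set P : ℕ → Prop := fun k => ∃ l : List V, l.Nodup ∧ l.Chain' H.Adj ∧ l.length = k with hP
  have hbound : ∀ k, P k → k ≤ Fintype.card V := by
    rintro k ⟨l, hn, -, hl⟩; exact hl ▸ hn.length_le_card
  have hP1 : P 1 := ⟨[v0], by simp, List.isChain_singleton v0, rfl⟩
  have hPN : P (Nat.findGreatest P (Fintype.card V)) :=
    Nat.findGreatest_spec (hbound 1 hP1) hP1
  set N := Nat.findGreatest P (Fintype.card V) with hN
  have hmax : ∀ l : List V, l.Nodup → l.Chain' H.Adj → l.length ≤ N := by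
    intro l hn hch
    exact Nat.le_findGreatest (hbound _ ⟨l, hn, hch, rfl⟩) ⟨l, hn, hch, rfl⟩
  obtain ⟨l, hnd, hch, hlen⟩ := hPN
  refine ⟨l, hnd, hch, ?_⟩
  by_contra hcov
  push_neg at hcov
  obtain ⟨u, hu⟩ := hcov
  have hlnil : l ≠ [] := by
    intro h
    rw [h] at hlen
    simp at hlen
    have := hmax [u] (by simp) (List.isChain_singleton u)
    simp at this
    omega
  obtain ⟨x, t, rfl⟩ := List.exists_cons_of_ne_nil hlnil
  set y := (x :: t).getLast (List.cons_ne_nil x t) with hy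
  have hyl : y ∈ x :: t := List.getLast_mem _
  have hux : u ≠ x := fun h => hu (h ▸ List.mem_cons_self (a := x) (l := t))
  have huy : u ≠ y := fun h => hu (h ▸ hyl)
  have hnux : ¬H.Adj u x := by
    intro hadj
    have hn2 : (u :: x :: t).Nodup := List.nodup_cons.mpr ⟨hu, hnd⟩
    have hch2 : (u :: x :: t).Chain' H.Adj := List.isChain_cons_cons.mpr ⟨hadj, hch⟩
    have := hmax _ hn2 hch2
    simp only [List.length_cons] at this hlen
    omega
  have hnyu : ¬H.Adj y u := by
    intro hadj
    have hn2 : ((x :: t) ++ [u]).Nodup := by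
      rw [List.nodup_append]
      exact ⟨hnd, by simp, fun a ha b hb => by simp at hb; subst hb; exact fun h => hu (by rw [← h]; exact ha)⟩
    have hch2 : ((x :: t) ++ [u]).Chain' H.Adj := by
      apply List.IsChain.append hch (List.isChain_singleton u)
      intro a ha b hb
      rw [List.getLast?_eq_getLast_of_ne_nil (List.cons_ne_nil x t)] at ha
      simp only [Option.mem_some_iff, List.head?_cons] at ha hb
      rw [← ha, ← hb]
      exact hadj
    have := hmax _ hn2 hch2
    simp only [List.length_append, List.length_cons] at this hlen
    simp at this
    omega
  by_cases ht : t = []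
  · subst ht
    obtain ⟨w⟩ := hc.preconnected u x
    cases w with
    | nil => exact hux rfl
    | @cons _ z _ h q =>
      have hn2 : ([u, z] : List V).Nodup := by simp [h.ne]
      have hch2 : ([u, z] : List V).Chain' H.Adj := List.isChain_pair.mpr h
      have := hmax _ hn2 hch2
      simp at this hlen
      omega
  · have hxy : x ≠ y := by
      intro h
      have hyt : y ∈ t := by
        rw [hy, List.getLast_cons ht]
        exact List.getLast_mem ht
      rw [List.nodup_cons] at hnd
      exact hnd.1 (h ▸ hyt)
    have hadjxy : H.Adj x y := hα u x y hux huy hxy hnux (fun h => hnyu h.symm)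
    obtain ⟨w⟩ := hc.preconnected u x
    obtain ⟨p, q, hpS, hqS, hpq⟩ :=
      exists_boundary {v : V | v ∈ x :: t} w (by simpa using hu) (by simp)
    have hqmem : q ∈ x :: t := hqS
    obtain ⟨A, B, hAB⟩ := List.append_of_mem hqmem
    have hperm : List.Perm (q :: (B ++ A)) (x :: t) := by
      rw [hAB]
      exact (List.perm_append_comm.cons q).trans List.perm_middle.symm
    have hpnm : p ∉ x :: t := by simpa using hpS
    have hnd' : (p :: q :: (B ++ A)).Nodup := by
      rw [List.nodup_cons]
      exact ⟨fun hmem => hpnm (hperm.mem_iff.mp hmem), hperm.nodup_iff.mpr hnd⟩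
    have hlast : (q :: B).getLast (List.cons_ne_nil q B) = y := by
      have h1 : (x :: t).getLast? = (q :: B).getLast? := by
        rw [hAB]
        exact List.getLast?_append_of_ne_nil A (List.cons_ne_nil q B)
      rw [List.getLast?_eq_getLast_of_ne_nil (List.cons_ne_nil x t),
        List.getLast?_eq_getLast_of_ne_nil (List.cons_ne_nil q B)] at h1
      rw [hy]
      exact (Option.some.inj h1).symm
    have hch' : (p :: q :: (B ++ A)).Chain' H.Adj := by
      have hrw : q :: (B ++ A) = (q :: B) ++ A := by simp
      rw [List.Chain', List.isChain_cons]
      constructor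
      · intro b hb
        simp only [List.head?_cons, Option.mem_some_iff] at hb
        rw [← hb]; exact hpq
      rw [hrw]
      apply List.IsChain.append
      · exact hch.infix ⟨A, [], by simp [hAB]⟩
      · exact hch.infix ⟨[], q :: B, by simp [hAB]⟩
      · intro a ha b hb
        rw [List.getLast?_eq_getLast_of_ne_nil (List.cons_ne_nil q B)] at ha
        simp only [Option.mem_some_iff] at ha
        rw [← ha, hlast]
        cases A with
        | nil => simp at hb
        | cons a0 A' =>
          simp only [List.head?_cons, Option.mem_some_iff] at hb
          have hx0 : a0 = x := by
            have := hAB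
            simp only [List.cons_append] at this
            exact (List.cons_eq_cons.mp this.symm).1
          rw [← hb, hx0]
          exact hadjxy.symm
    have hlen' := hmax _ hnd' hch'
    have hlen2 : A.length + B.length + 1 = N := by
      have : (x :: t).length = (A ++ q :: B).length := by rw [hAB]
      simp only [List.length_cons, List.length_append] at this hlen
      omega
    simp only [List.length_cons, List.length_append] at hlen'
    omega

variable [DecidableEq V]

lemma ordered_case {H : SimpleGraph V} {L : List V} (hnd : L.Nodup) (hch : L.Chain' H.Adj)
    (A B C : List V) (u v : V) (hL : L = A ++ u :: (B ++ v :: C)) :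
    ∃ p : H.Walk u v, p.IsPath ∧
      ((p.edges.map fun e => (⟨(zipE L).idxOf e % 2, by omega⟩ : Fin 2)).Chain' (· ≠ ·)) := by
  set M : List V := u :: (B ++ [v]) with hM
  have hML : L = A ++ M ++ C := by
    rw [hL, hM]; simp
  have hinf : M <:+: L := ⟨A, C, hML.symm⟩
  have hchM : M.Chain' H.Adj := hch.infix hinf
  have hndM : M.Nodup := hnd.sublist hinf.sublist
  have hlast : M.getLast (List.cons_ne_nil u (B ++ [v])) = v := by
    exact List.getLast_append_singleton (u :: B)
  obtain ⟨p, hsup, hedge⟩ := walk_of_chain (B ++ [v]) u v hchM hlast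
  have hLlen : L.length = A.length + B.length + C.length + 2 := by
    rw [hL]; simp; omega
  have hMlen : M.length = B.length + 2 := by rw [hM]; simp
  have hgetM : ∀ (k : ℕ) (hk : k < M.length),
      M[k] = L[A.length + k]'(by rw [hLlen]; rw [hMlen] at hk; omega) := by
    intro k hk
    have h1 := List.getElem_of_eq hML (i := A.length + k) (by rw [hLlen]; rw [hMlen] at hk; omega)
    rw [h1]
    rw [List.getElem_append_left (by simp [List.length_append]; omega)]
    rw [List.getElem_append_right (by omega)]
    simp
  have hgetE : ∀ (k : ℕ) (hk : k + 1 < M.length),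
      (zipE M)[k]'(by rw [zipE_length]; omega) =
      (zipE L)[A.length + k]'(by rw [zipE_length, hLlen]; rw [hMlen] at hk; omega) := by
    intro k hk
    rw [zipE_get M k hk, zipE_get L (A.length + k) (by rw [hLlen]; rw [hMlen] at hk; omega)]
    rw [hgetM k (by omega), hgetM (k+1) hk]
    rfl
  refine ⟨p, ?_, ?_⟩
  · rw [SimpleGraph.Walk.isPath_def, hsup]
    exact hndM
  rw [hedge]
  rw [List.Chain', List.isChain_iff_getElem]
  intro i hi
  simp only [List.length_map, zipE_length, hMlen, List.length_cons, List.length_append, List.length_singleton, List.length_nil] at hi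
  have hi' : i < B.length + 1 := by omega
  simp only [List.get_eq_getElem, List.getElem_map]
  have key : ∀ (k : ℕ) (hk : k < B.length + 1),
      (zipE L).idxOf ((zipE M)[k]'(by rw [zipE_length, hMlen]; omega)) = A.length + k := by
    intro k hk
    rw [hgetE k (by rw [hMlen]; omega)]
    have hlt : A.length + k < (zipE L).length := by rw [zipE_length, hLlen]; omega
    have := List.get_idxOf (zipE_nodup hnd) ⟨A.length + k, hlt⟩
    simpa using this
  intro hcontra
  rw [Fin.mk.injEq] at hcontra
  rw [key i (by omega), key (i+1) (by omega)] at hcontra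
  omega

lemma exists_coloring {H : SimpleGraph V} (L : List V) (hnd : L.Nodup)
    (hch : L.Chain' H.Adj) (hall : ∀ v : V, v ∈ L) :
    ∃ c : Sym2 V → Fin 2, IsProperPathColoring H c := by
  refine ⟨fun e => (⟨(zipE L).idxOf e % 2, by omega⟩ : Fin 2), fun u v huv => ?_⟩
  obtain ⟨A, T, hT⟩ := List.append_of_mem (hall u)
  by_cases hvT : v ∈ T
  · obtain ⟨B, C, hBC⟩ := List.append_of_mem hvT
    exact ordered_case hnd hch A B C u v (by rw [hT, hBC])
  · have hvA : v ∈ A := by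
      have := hall v
      rw [hT] at this
      simp only [List.mem_append, List.mem_cons] at this
      rcases this with h | h | h
      · exact h
      · exact absurd h.symm huv
      · exact absurd h hvT
    obtain ⟨A', B', hA⟩ := List.append_of_mem hvA
    obtain ⟨p, hp, hcc⟩ := ordered_case hnd hch A' B' T v u (by rw [hT, hA]; simp)
    refine ⟨p.reverse, hp.reverse, ?_⟩
    rw [SimpleGraph.Walk.edges_reverse, List.map_reverse, List.Chain', List.isChain_reverse]
    exact hcc.imp fun a b h => h.symm

end Aux

/-- If `G` is connected, triangle-free, has diameter 2 and `Gᶜ` is connected,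
then `pc Gᶜ = 2`. -/
theorem pc_compl_triangle_free_diam_two {V : Type*} [Fintype V] (G : SimpleGraph V)
    (hG : G.Connected) (htf : G.CliqueFree 3) (hd : G.diam = 2)
    (hconn : Gᶜ.Connected) :
    pc Gᶜ = 2 := by
  classical
  have hne : Nonempty V := hG.nonempty
  obtain ⟨u₀, v₀, hdist⟩ := G.exists_dist_eq_diam
  rw [hd] at hdist
  have hne2 : u₀ ≠ v₀ := by
    intro h
    rw [h, SimpleGraph.dist_self] at hdist
    exact absurd hdist (by norm_num)
  have hedge : ∃ a b : V, G.Adj a b := by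
    obtain ⟨p⟩ := hG.preconnected u₀ v₀
    cases p with
    | nil => exact absurd rfl hne2
    | cons h q => exact ⟨_, _, h⟩
  obtain ⟨a, b, hab⟩ := hedge
  have hα : ∀ x y z : V, x ≠ y → x ≠ z → y ≠ z →
      ¬Gᶜ.Adj x y → ¬Gᶜ.Adj x z → Gᶜ.Adj y z := by
    intro x y z hxy hxz hyz h1 h2
    by_contra h3
    have g1 : G.Adj x y := by
      by_contra hg
      exact h1 ((compl_adj G x y).mpr ⟨hxy, hg⟩)
    have g2 : G.Adj x z := by
      by_contra hg
      exact h2 ((compl_adj G x z).mpr ⟨hxz, hg⟩)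
    have g3 : G.Adj y z := by
      by_contra hg
      exact h3 ((compl_adj G y z).mpr ⟨hyz, hg⟩)
    exact htf {x, y, z} (is3Clique_triple_iff.mpr ⟨g1, g2, g3⟩)
  obtain ⟨L, hnd, hch, hall⟩ := exists_ham_list Gᶜ hconn hα
  obtain ⟨c, hc⟩ := exists_coloring L hnd hch hall
  have h2 : 2 ∈ {k : ℕ | ∃ c : Sym2 V → Fin k, IsProperPathColoring Gᶜ c} := ⟨c, hc⟩
  have hle : sInf {k : ℕ | ∃ c : Sym2 V → Fin k, IsProperPathColoring Gᶜ c} ≤ 2 :=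
    Nat.sInf_le h2
  have hmem := Nat.sInf_mem (⟨2, h2⟩ :
    Set.Nonempty {k : ℕ | ∃ c : Sym2 V → Fin k, IsProperPathColoring Gᶜ c})
  set m := sInf {k : ℕ | ∃ c : Sym2 V → Fin k, IsProperPathColoring Gᶜ c} with hm
  obtain ⟨c', hc'⟩ := hmem
  have h0 : m ≠ 0 := by
    intro h
    have : Fin 0 := h ▸ c' s(a, a)
    exact this.elim0
  have h1 : m ≠ 1 := by
    intro h
    obtain ⟨p, hp, hch2⟩ := hc' a b (G.ne_of_adj hab)
    cases p with
    | nil => exact (G.ne_of_adj hab) rfl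
    | @cons _ z _ hadj q =>
      cases q with
      | nil => exact hadj.2 hab
      | cons hadj' q' =>
        rw [SimpleGraph.Walk.edges_cons, SimpleGraph.Walk.edges_cons,
          List.map_cons, List.map_cons] at hch2
        have hne3 := (List.isChain_cons_cons.mp hch2).1
        have hsub : Subsingleton (Fin m) := by rw [h]; infer_instance
        exact hne3 (Subsingleton.elim _ _)
  show m = 2
  omega
end

section
/- If G is a connected simple graph that is not complete and its complement Ḡ is triangle-free, then pc(G) = 2. -/
open SimpleGraph

private lemma walk_loop_length_zero {V : Type*} {G : SimpleGraph V} {u : V}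
    (p : G.Walk u u) (hp : p.IsPath) : p.length = 0 := by
  cases p with
  | nil => rfl
  | cons h q =>
    rw [SimpleGraph.Walk.cons_isPath_iff] at hp
    exact absurd q.end_mem_support hp.2

private lemma exists_ham {V : Type*} [Fintype V] [Nonempty V] (G : SimpleGraph V)
    (hG : G.Connected) (htf : Gᶜ.CliqueFree 3) :
    ∃ (a b : V) (p : G.Walk a b), p.IsPath ∧ ∀ x : V, x ∈ p.support := by
  classical
  set P : ℕ → Prop := fun n => ∃ (a b : V) (p : G.Walk a b), p.IsPath ∧ p.length = n with hPdef
  have h0 : P 0 := ⟨Classical.arbitrary V, Classical.arbitrary V, Walk.nil, Walk.IsPath.nil, rfl⟩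
  set L := Nat.findGreatest P (Fintype.card V) with hLdef
  obtain ⟨u, v, p, hp, hlen⟩ : P L := Nat.findGreatest_spec (Nat.zero_le _) h0
  have hmax : ∀ (a b : V) (q : G.Walk a b), q.IsPath → q.length ≤ L := by
    intro a b q hq
    exact Nat.le_findGreatest (le_of_lt hq.length_lt) ⟨a, b, q, hq, rfl⟩
  refine ⟨u, v, p, hp, ?_⟩
  by_contra hnot
  push_neg at hnot
  obtain ⟨w, hw⟩ := hnot
  have hwu : w ≠ u := fun h => hw (h ▸ p.start_mem_support)
  have hwv : w ≠ v := fun h => hw (h ▸ p.end_mem_support)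
  by_cases hadju : G.Adj w u
  · have h1 : (Walk.cons hadju p).IsPath := hp.cons hw
    have h2 := hmax _ _ _ h1
    simp only [Walk.length_cons, hlen] at h2
    omega
  by_cases hadjv : G.Adj w v
  · have hwrev : w ∉ p.reverse.support := by
      rw [Walk.support_reverse]; simpa using hw
    have h1 : (Walk.cons hadjv p.reverse).IsPath := hp.reverse.cons hwrev
    have h2 := hmax _ _ _ h1
    simp only [Walk.length_cons, Walk.length_reverse, hlen] at h2
    omega
  -- w nonadjacent to both endpoints
  have hdist : 2 ≤ G.dist w u := by
    have h1 : 0 < G.dist w u := (hG.preconnected w u).pos_dist_of_ne hwu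
    have h2 : G.dist w u ≠ 1 := fun h => hadju (SimpleGraph.dist_eq_one_iff_adj.mp h)
    omega
  by_cases hL1 : p.length ≤ 1
  · obtain ⟨q, hq, hqlen⟩ := hG.exists_path_of_dist w u
    have := hmax _ _ q hq
    omega
  push_neg at hL1
  have huv : u ≠ v := by
    intro h; subst h
    have := walk_loop_length_zero p hp
    omega
  have hadjuv : G.Adj u v := by
    by_contra hA
    refine htf {u, v, w} (SimpleGraph.is3Clique_triple_iff.mpr ?_)
    refine ⟨?_, ?_, ?_⟩
    · exact (SimpleGraph.compl_adj G _ _).mpr ⟨huv, hA⟩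
    · exact (SimpleGraph.compl_adj G _ _).mpr ⟨Ne.symm hwu, fun h => hadju h.symm⟩
    · exact (SimpleGraph.compl_adj G _ _).mpr ⟨Ne.symm hwv, fun h => hadjv h.symm⟩
  have hedge : s(v, u) ∉ p.edges := by
    intro hmem
    cases p with
    | nil => simp at hmem
    | cons h q =>
      rename_i x
      rw [Walk.edges_cons, List.mem_cons] at hmem
      rw [Walk.cons_isPath_iff] at hp
      rcases hmem with hmem | hmem
      · rw [Sym2.eq_iff] at hmem
        rcases hmem with ⟨h1, h2⟩ | ⟨h1, h2⟩
        · exact huv h1.symm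
        · subst h1
          have := walk_loop_length_zero q hp.1
          simp only [Walk.length_cons, this] at hL1
          omega
      · exact hp.2 (q.snd_mem_support_of_mem_edges hmem)
  -- build the cycle
  have hcyc : (Walk.cons hadjuv.symm p).IsCycle :=
    (Walk.cons_isCycle_iff p hadjuv.symm).mpr ⟨hp, hedge⟩
  set c : G.Walk v v := Walk.cons hadjuv.symm p with hcdef
  -- boundary dart
  obtain ⟨q0⟩ := hG.preconnected u w
  obtain ⟨d, hd, hdfst, hdsnd⟩ :=
    q0.exists_boundary_dart {x | x ∈ p.support} p.start_mem_support hw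
  have hy : d.fst ∈ c.support := by
    rw [hcdef, Walk.support_cons]
    exact List.mem_cons_of_mem _ hdfst
  have hcyc' : (c.rotate _ hy).IsCycle := hcyc.rotate hy
  have hrot : (c.rotate _ hy).support.tail ~r c.support.tail := Walk.support_rotate c _ hy
  have hlenc' : (c.rotate _ hy).length = c.length := by
    have h1 := (Walk.rotate_darts c _ hy).perm.length_eq
    rwa [Walk.length_darts, Walk.length_darts] at h1
  obtain ⟨z, hadjz, t, ht⟩ := Walk.not_nil_iff.mp hcyc'.not_nil
  rw [ht] at hcyc' hrot hlenc'
  have htpath : t.IsPath := ((Walk.cons_isCycle_iff t hadjz).mp hcyc').1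
  have htsupp : t.support ~r p.support := by
    rw [Walk.support_cons, List.tail_cons] at hrot
    rw [hcdef, Walk.support_cons, List.tail_cons] at hrot
    exact hrot
  have hxt : d.snd ∉ t.support := fun h => hdsnd (htsupp.mem_iff.mp h)
  have hxtr : d.snd ∉ t.reverse.support := by
    rw [Walk.support_reverse]; simpa using hxt
  have hfin : (Walk.cons d.adj.symm t.reverse).IsPath := (htpath.reverse).cons hxtr
  have h2 := hmax _ _ _ hfin
  rw [Walk.length_cons, Walk.length_reverse] at h2
  rw [Walk.length_cons] at hlenc'
  rw [hcdef, Walk.length_cons, hlen] at hlenc'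
  omega

private lemma infix_map {α β : Type*} (f : α → β) {l₁ l₂ : List α} (h : l₁ <:+: l₂) :
    l₁.map f <:+: l₂.map f := by
  obtain ⟨s, t, rfl⟩ := h
  exact ⟨s.map f, t.map f, by simp⟩

open Fin.NatCast in
private lemma chain_alt {α : Type*} [DecidableEq α] (l : List α) (hl : l.Nodup) :
    (l.map (fun e => ((List.idxOf e l : ℕ) : Fin 2))).Chain' (· ≠ ·) := by
  unfold List.Chain'
  rw [List.isChain_iff_getElem]
  intro i hi
  simp only [List.length_map] at hi
  have h1 : i < l.length := by omega
  have h2 : i + 1 < l.length := by omega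
  simp only [List.getElem_map]
  rw [hl.idxOf_getElem i h1, hl.idxOf_getElem (i+1) h2]
  intro h
  have := congrArg Fin.val h
  rw [Fin.val_natCast, Fin.val_natCast] at this
  omega

open Fin.NatCast in
private lemma two_colorable {V : Type*} {G : SimpleGraph V} {a b : V} (p : G.Walk a b)
    (hp : p.IsPath) (hham : ∀ x : V, x ∈ p.support) :
    ∃ c : Sym2 V → Fin 2, IsProperPathColoring G c := by
  classical
  refine ⟨fun e => ((List.idxOf e p.edges : ℕ) : Fin 2), ?_⟩
  set c : Sym2 V → Fin 2 := fun e => ((List.idxOf e p.edges : ℕ) : Fin 2) with hcdef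
  have hchain : (p.edges.map c).Chain' (· ≠ ·) := chain_alt _ hp.isTrail.edges_nodup
  have key : ∀ {x y : V} (q : G.Walk x y), q.edges <:+: p.edges →
      (q.edges.map c).Chain' (· ≠ ·) := fun q hq => List.IsChain.infix hchain (infix_map c hq)
  intro u v huv
  have hv : v ∈ p.support := hham v
  by_cases hu : u ∈ (p.takeUntil v hv).support
  · refine ⟨(p.takeUntil v hv).dropUntil u hu, (hp.takeUntil hv).dropUntil hu, ?_⟩
    apply key
    have h1 : ((p.takeUntil v hv).dropUntil u hu).edges <:+ (p.takeUntil v hv).edges := by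
      refine ⟨((p.takeUntil v hv).takeUntil u hu).edges, ?_⟩
      rw [← Walk.edges_append, Walk.take_spec]
    have h2 : (p.takeUntil v hv).edges <+: p.edges := by
      refine ⟨(p.dropUntil v hv).edges, ?_⟩
      rw [← Walk.edges_append, Walk.take_spec]
    exact h1.isInfix.trans h2.isInfix
  · have hu2 : u ∈ (p.dropUntil v hv).support := by
      have := hham u
      rw [← Walk.take_spec p hv, Walk.support_append, List.mem_append] at this
      rcases this with h | h
      · exact absurd h hu
      · exact List.mem_of_mem_tail h
    refine ⟨((p.dropUntil v hv).takeUntil u hu2).reverse,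
      ((hp.dropUntil hv).takeUntil hu2).reverse, ?_⟩
    rw [Walk.edges_reverse, List.map_reverse]
    unfold List.Chain'
    rw [List.isChain_reverse]
    have hinf : ((p.dropUntil v hv).takeUntil u hu2).edges <:+: p.edges := by
      have h1 : ((p.dropUntil v hv).takeUntil u hu2).edges <+: (p.dropUntil v hv).edges := by
        refine ⟨((p.dropUntil v hv).dropUntil u hu2).edges, ?_⟩
        rw [← Walk.edges_append, Walk.take_spec]
      have h2 : (p.dropUntil v hv).edges <:+ p.edges := by
        refine ⟨(p.takeUntil v hv).edges, ?_⟩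
        rw [← Walk.edges_append, Walk.take_spec]
      exact h1.isInfix.trans h2.isInfix
    exact List.IsChain.imp (fun a b h => Ne.symm h) (key _ hinf)

/-- If `G` is connected, noncomplete, and its complement is triangle-free,
then `pc G = 2`. -/
theorem pc_eq_two_of_compl_triangle_free {V : Type*} [Fintype V] (G : SimpleGraph V)
    (hG : G.Connected) (hnc : G ≠ ⊤) (htf : Gᶜ.CliqueFree 3) :
    pc G = 2 := by
  obtain ⟨u, v, huv, hnadj⟩ : ∃ u v : V, u ≠ v ∧ ¬G.Adj u v := by
    by_contra h
    push_neg at h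
    apply hnc
    ext x y
    simp only [top_adj]
    exact ⟨fun hxy => hxy.ne, fun hne => h x y hne⟩
  haveI : Nonempty V := ⟨u⟩
  have h2 : 2 ∈ {k : ℕ | ∃ c : Sym2 V → Fin k, IsProperPathColoring G c} := by
    obtain ⟨a, b, p, hp, hham⟩ := exists_ham G hG htf
    exact two_colorable p hp hham
  have hlb : ∀ k ∈ {k : ℕ | ∃ c : Sym2 V → Fin k, IsProperPathColoring G c}, 2 ≤ k := by
    rintro k ⟨c, hc⟩
    match k with
    | 0 => exact (c s(u, u)).elim0
    | 1 =>
      exfalso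
      obtain ⟨p, hp, hch⟩ := hc u v huv
      cases p with
      | nil => exact huv rfl
      | cons h q =>
        cases q with
        | nil => exact hnadj h
        | cons h2 q2 =>
          unfold List.Chain' at hch
          rw [Walk.edges_cons, Walk.edges_cons, List.map_cons, List.map_cons,
            List.isChain_cons_cons] at hch
          exact hch.1 (Subsingleton.elim _ _)
    | (n+2) => omega
  exact le_antisymm (Nat.sInf_le h2) (le_csInf ⟨2, h2⟩ hlb)
end
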